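/- arXiv:1902.07604 — 2 statements merged into one kernel-verified Lean document; each statement's English description precedes it below -/
import Mathlib

section
/- Let 0 < p ≤ 1, let v be a weight on (0,∞), u ∈ Ω̃₁ and w ∈ Ω_p. Define ω(x) := (∫_0^x u(t) dt)^{−1} (∫_x^∞ w(t)^p dt)^{1/p} v(x). Then for every nonnegative measurable f on (0,∞), ‖f‖_{M(Cop₁(u), Ces_{p,p}(w,v))} ≈ ‖f·ω‖_{p',(0,∞)}, with equivalence constants depending only on p. -/
open MeasureTheory ENNReal Set Filter

/-- `‖f‖_{p,s}`: the Lebesgue functional `(∫_s f^p)^{1/p}` for `p < ∞`,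
and `esssup_s f` for `p = ∞`. -/
noncomputable def wNorm (p : ℝ≥0∞) (f : ℝ → ℝ≥0∞) (s : Set ℝ) : ℝ≥0∞ :=
  if p = ∞ then essSup f (volume.restrict s)
  else (∫⁻ x in s, f x ^ p.toReal) ^ (1 / p.toReal)

/-- The weighted Cesàro functional `‖f‖_{Ces_{p,q}(u,v)} = ‖ t ↦ ‖f‖_{p,v,(0,t)} ‖_{q,u,(0,∞)}`. -/
noncomputable def cesaroNorm (p q : ℝ≥0∞) (u v : ℝ → ℝ≥0∞) (f : ℝ → ℝ≥0∞) : ℝ≥0∞ :=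
  wNorm q (fun t => wNorm p (fun x => f x * v x) (Ioo 0 t) * u t) (Ioi 0)

/-- The weighted Copson functional `‖f‖_{Cop_{p,q}(u,v)} = ‖ t ↦ ‖f‖_{p,v,(t,∞)} ‖_{q,u,(0,∞)}`. -/
noncomputable def copsonNorm (p q : ℝ≥0∞) (u v : ℝ → ℝ≥0∞) (f : ℝ → ℝ≥0∞) : ℝ≥0∞ :=
  wNorm q (fun t => wNorm p (fun x => f x * v x) (Ioi t) * u t) (Ioi 0)

/-- The multiplier functional `‖f‖_{M(X,Y)} = sup { ‖f·g‖_Y / ‖g‖_X :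
g nonnegative measurable, g not a.e. zero on (0,∞) }`. -/
noncomputable def multNorm (X Y : (ℝ → ℝ≥0∞) → ℝ≥0∞) (f : ℝ → ℝ≥0∞) : ℝ≥0∞ :=
  ⨆ (g : ℝ → ℝ≥0∞) (_ : Measurable g ∧
      ¬ (∀ᵐ x ∂(volume.restrict (Ioi (0:ℝ))), g x = 0)),
    Y (fun x => f x * g x) / X g

/-- A weight on `(0,∞)`: measurable, positive and finite a.e. on `(0,∞)`. -/
def IsWeightOn (v : ℝ → ℝ≥0∞) : Prop :=
  Measurable v ∧ ∀ᵐ x ∂(volume.restrict (Ioi (0:ℝ))), 0 < v x ∧ v x < ∞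

/-- `u ∈ Ω_q`: `0 < ‖u‖_{q,(t,∞)} < ∞` for all `t > 0`. -/
def MemOmega (q : ℝ≥0∞) (u : ℝ → ℝ≥0∞) : Prop :=
  Measurable u ∧ ∀ t : ℝ, 0 < t → 0 < wNorm q u (Ioi t) ∧ wNorm q u (Ioi t) < ∞

/-- `u ∈ Ω̃_q`: `0 < ‖u‖_{q,(0,t)} < ∞` for all `t > 0`. -/
def MemOmegaDual (q : ℝ≥0∞) (u : ℝ → ℝ≥0∞) : Prop :=
  Measurable u ∧ ∀ t : ℝ, 0 < t → 0 < wNorm q u (Ioo 0 t) ∧ wNorm q u (Ioo 0 t) < ∞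

/-- The exponent `p'`: `p/(1−p)` if `p < 1`, `∞` if `p = 1`, `p/(p−1)` if `p > 1`. -/
noncomputable def dualExp (p : ℝ) : ℝ≥0∞ :=
  if p < 1 then ENNReal.ofReal (p / (1 - p))
  else if p = 1 then ∞
  else ENNReal.ofReal (p / (p - 1))

/-- An admissible function: continuous and strictly increasing on `[0,∞)`,
vanishing at `0` and tending to `∞` at `∞`. -/
def AdmissibleFn (U : ℝ → ℝ≥0∞) : Prop :=
  ContinuousOn U (Ici 0) ∧ StrictMonoOn U (Ici 0) ∧ U 0 = 0 ∧
    Tendsto U atTop (nhds ∞)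

/-- φ is equivalent to ψ on `(0,∞)` up to multiplicative constants. -/
def EquivOn (φ ψ : ℝ → ℝ≥0∞) : Prop :=
  ∃ c C : ℝ≥0∞, 0 < c ∧ C < ∞ ∧ ∀ x ∈ Ioi (0:ℝ), c * ψ x ≤ φ x ∧ φ x ≤ C * ψ x

/-- `φ ∈ Q_U`: φ is non-degenerate and `U`-quasiconcave, i.e. φ is equivalent to a
nondecreasing function on `(0,∞)`, `φ/U` is equivalent to a nonincreasing function on
`(0,∞)`, and `lim_{t→0+} φ(t) = lim_{t→∞} 1/φ(t) = lim_{t→∞} φ(t)/U(t)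
= lim_{t→0+} U(t)/φ(t) = 0`. -/
def MemQClass (U φ : ℝ → ℝ≥0∞) : Prop :=
  (∃ ψ : ℝ → ℝ≥0∞, MonotoneOn ψ (Ioi 0) ∧ EquivOn φ ψ) ∧
  (∃ ψ : ℝ → ℝ≥0∞, AntitoneOn ψ (Ioi 0) ∧ EquivOn (fun x => φ x / U x) ψ) ∧
  Tendsto φ (nhdsWithin 0 (Ioi 0)) (nhds 0) ∧
  Tendsto (fun t => (φ t)⁻¹) atTop (nhds 0) ∧
  Tendsto (fun t => φ t / U t) atTop (nhds 0) ∧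
  Tendsto (fun t => U t / φ t) (nhdsWithin 0 (Ioi 0)) (nhds 0)

section Aux

lemma wNorm_one (F : ℝ → ℝ≥0∞) (s : Set ℝ) : wNorm 1 F s = ∫⁻ x in s, F x := by
  simp [wNorm]

lemma wNorm_ofReal {p : ℝ} (hp : 0 < p) (F : ℝ → ℝ≥0∞) (s : Set ℝ) :
    wNorm (ENNReal.ofReal p) F s = (∫⁻ x in s, F x ^ p) ^ (1/p) := by
  rw [wNorm, if_neg ENNReal.ofReal_ne_top, ENNReal.toReal_ofReal hp.le]

lemma wNorm_top (F : ℝ → ℝ≥0∞) (s : Set ℝ) :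
    wNorm ∞ F s = essSup F (volume.restrict s) := by
  simp [wNorm]

lemma swap_lemma (a b : ℝ → ℝ≥0∞) (ha : Measurable a) (hb : Measurable b) :
    ∫⁻ t in Ioi (0:ℝ), (∫⁻ x in Ioi t, a x) * b t
      = ∫⁻ x in Ioi (0:ℝ), a x * ∫⁻ t in Ioo 0 x, b t := by
  have hG : Measurable (fun q : ℝ × ℝ => if q.1 < q.2 then a q.2 * b q.1 else 0) :=
    Measurable.ite (measurableSet_lt measurable_fst measurable_snd)
      ((ha.comp measurable_snd).mul (hb.comp measurable_fst)) measurable_const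
  have step1 : ∀ t : ℝ, (∫⁻ x in Ioi t, a x) * b t
      = ∫⁻ x, (if t < x then a x * b t else 0) := by
    intro t
    rw [← lintegral_mul_const _ ha, ← lintegral_indicator measurableSet_Ioi]
    congr 1
  have step3 : ∀ x : ℝ, (∫⁻ t in Ioi (0:ℝ), (if t < x then a x * b t else 0))
      = a x * ∫⁻ t in Ioo 0 x, b t := by
    intro x
    have : ∀ t : ℝ, (if t < x then a x * b t else 0)
        = (Iio x).indicator (fun t => a x * b t) t := by
      intro t; simp [Set.indicator_apply, Set.mem_Iio]
    simp_rw [this]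
    rw [lintegral_indicator measurableSet_Iio, Measure.restrict_restrict measurableSet_Iio,
      Set.inter_comm, Set.Ioi_inter_Iio, lintegral_const_mul _ hb]
  calc ∫⁻ t in Ioi (0:ℝ), (∫⁻ x in Ioi t, a x) * b t
      = ∫⁻ t in Ioi (0:ℝ), ∫⁻ x, (if t < x then a x * b t else 0) := by
        simp_rw [step1]
    _ = ∫⁻ x, ∫⁻ t in Ioi (0:ℝ), (if t < x then a x * b t else 0) :=
        lintegral_lintegral_swap hG.aemeasurable
    _ = ∫⁻ x, (Ioi (0:ℝ)).indicator (fun x => a x * ∫⁻ t in Ioo 0 x, b t) x := by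
        congr 1; funext x
        rw [step3 x]
        by_cases hx : (0:ℝ) < x
        · rw [Set.indicator_of_mem (Set.mem_Ioi.2 hx)]
        · rw [Set.indicator_of_notMem (by simpa using hx)]
          have : Ioo (0:ℝ) x = ∅ := Ioo_eq_empty (by simpa using hx)
          simp [this]
    _ = ∫⁻ x in Ioi (0:ℝ), a x * ∫⁻ t in Ioo 0 x, b t :=
        lintegral_indicator measurableSet_Ioi _

lemma swap_lemma' (a b : ℝ → ℝ≥0∞) (ha : Measurable a) (hb : Measurable b) :
    ∫⁻ t in Ioi (0:ℝ), (∫⁻ x in Ioo 0 t, a x) * b t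
      = ∫⁻ x in Ioi (0:ℝ), a x * ∫⁻ t in Ioi x, b t := by
  have h := swap_lemma b a hb ha
  calc ∫⁻ t in Ioi (0:ℝ), (∫⁻ x in Ioo 0 t, a x) * b t
      = ∫⁻ t in Ioi (0:ℝ), b t * ∫⁻ x in Ioo 0 t, a x := by simp_rw [mul_comm]
    _ = ∫⁻ t in Ioi (0:ℝ), (∫⁻ x in Ioi t, b x) * a t := h.symm
    _ = ∫⁻ x in Ioi (0:ℝ), a x * ∫⁻ t in Ioi x, b t := by simp_rw [mul_comm]

end Aux

section Repr

lemma copson_repr (u : ℝ → ℝ≥0∞) (hu : Measurable u) (g : ℝ → ℝ≥0∞) (hg : Measurable g) :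
    copsonNorm 1 1 u (fun _ => 1) g
      = ∫⁻ x in Ioi (0:ℝ), g x * ∫⁻ t in Ioo 0 x, u t := by
  rw [copsonNorm, wNorm_one]
  simp_rw [wNorm_one, mul_one]
  exact swap_lemma g u hg hu

lemma cesaro_repr {p : ℝ} (hp : 0 < p) (w v F : ℝ → ℝ≥0∞) (hw : Measurable w)
    (hv : Measurable v) (hF : Measurable F) :
    cesaroNorm (ENNReal.ofReal p) (ENNReal.ofReal p) w v F
      = (∫⁻ x in Ioi (0:ℝ), (F x * v x) ^ p * ∫⁻ t in Ioi x, w t ^ p) ^ (1/p) := by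
  rw [cesaroNorm, wNorm_ofReal hp]
  simp_rw [wNorm_ofReal hp]
  have e1 : ∀ t : ℝ, ((∫⁻ x in Ioo (0:ℝ) t, (F x * v x) ^ p) ^ (1/p) * w t) ^ p
      = (∫⁻ x in Ioo (0:ℝ) t, (F x * v x) ^ p) * w t ^ p := by
    intro t
    rw [ENNReal.mul_rpow_of_nonneg _ _ hp.le, ← ENNReal.rpow_mul, one_div,
      inv_mul_cancel₀ hp.ne', ENNReal.rpow_one]
  simp_rw [e1]
  rw [swap_lemma' (fun x => (F x * v x) ^ p) (fun t => w t ^ p)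
    ((hF.mul hv).pow_const p) (hw.pow_const p)]

end Repr

section Core

lemma core_p_lt_one (p : ℝ) (hp : 0 < p) (hplt : p < 1)
    (U h : ℝ → ℝ≥0∞) (hUm : Measurable U) (hhm : Measurable h)
    (hU : ∀ x ∈ Ioi (0:ℝ), U x ≠ 0 ∧ U x ≠ ∞) :
    (⨆ (g : ℝ → ℝ≥0∞) (_ : Measurable g ∧
        ¬ (∀ᵐ x ∂(volume.restrict (Ioi (0:ℝ))), g x = 0)),
      (∫⁻ x in Ioi (0:ℝ), (g x * U x * h x) ^ p) ^ (1/p) / ∫⁻ x in Ioi (0:ℝ), g x * U x)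
      = wNorm (dualExp p) h (Ioi 0) := by
  have h1p : 0 < 1 - p := by linarith
  set q := p / (1 - p) with hqdef
  have hq0 : 0 < q := div_pos hp h1p
  have hde : dualExp p = ENNReal.ofReal q := by rw [dualExp, if_pos hplt]
  rw [hde, wNorm_ofReal hq0]
  have hinv : 1 / q = (1 - p) / p := one_div_div _ _
  set I := ∫⁻ x in Ioi (0:ℝ), h x ^ q with hIdef
  apply le_antisymm
  · refine iSup_le fun g => iSup_le fun hg => ?_
    refine ENNReal.div_le_of_le_mul ?_
    have hconj : Real.HolderConjugate (1/p) (1/(1-p)) := by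
      rw [Real.holderConjugate_iff]
      constructor
      · rw [lt_div_iff₀ hp]; linarith
      · rw [one_div, one_div, inv_inv, inv_inv]; ring
    have hH := ENNReal.lintegral_mul_le_Lp_mul_Lq (volume.restrict (Ioi (0:ℝ))) hconj
      (((hg.1.mul hUm).pow_const p).aemeasurable) ((hhm.pow_const p).aemeasurable)
    have ea : ∀ a : ℝ≥0∞, (a ^ p) ^ (1/p) = a := fun a => by
      rw [← ENNReal.rpow_mul, mul_one_div, div_self hp.ne', ENNReal.rpow_one]
    have eb : ∀ a : ℝ≥0∞, (a ^ p) ^ (1/(1-p)) = a ^ q := fun a => by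
      rw [← ENNReal.rpow_mul, mul_one_div, hqdef]
    simp only [Pi.mul_apply, ea, eb, one_div_one_div] at hH
    calc (∫⁻ x in Ioi (0:ℝ), (g x * U x * h x) ^ p) ^ (1/p)
        = (∫⁻ x in Ioi (0:ℝ), (g x * U x) ^ p * h x ^ p) ^ (1/p) := by
          simp_rw [ENNReal.mul_rpow_of_nonneg _ _ hp.le]
      _ ≤ ((∫⁻ x in Ioi (0:ℝ), g x * U x) ^ p * I ^ (1-p)) ^ (1/p) :=
          ENNReal.rpow_le_rpow hH (by positivity)
      _ = (∫⁻ x in Ioi (0:ℝ), g x * U x) * I ^ ((1-p) * (1/p)) := by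
          rw [ENNReal.mul_rpow_of_nonneg _ _ (by positivity), ← ENNReal.rpow_mul,
            ← ENNReal.rpow_mul, mul_one_div, div_self hp.ne', ENNReal.rpow_one]
      _ = I ^ (1/q) * ∫⁻ x in Ioi (0:ℝ), g x * U x := by
          rw [mul_comm, hinv, mul_one_div]
  · set ψ : ℕ → ℝ → ℝ≥0∞ :=
      fun n x => (Ioo (0:ℝ) n).indicator (fun x => min (h x) n ^ q) x with hψdef
    have hψm : ∀ n, Measurable (ψ n) := fun n =>
      ((hhm.min measurable_const).pow_const q).indicator measurableSet_Ioo
    have hcast : ∀ {n m : ℕ}, n ≤ m → ((n:ℝ≥0∞) ≤ (m:ℝ≥0∞)) := fun hnm =>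
      Nat.cast_le.2 hnm
    have hψmono : Monotone ψ := by
      intro n m hnm x
      by_cases hx : x ∈ Ioo (0:ℝ) (n:ℝ)
      · have hx' : x ∈ Ioo (0:ℝ) (m:ℝ) :=
          ⟨hx.1, lt_of_lt_of_le hx.2 (Nat.cast_le.2 hnm)⟩
        simp only [hψdef, indicator_of_mem hx, indicator_of_mem hx']
        exact ENNReal.rpow_le_rpow (min_le_min le_rfl (hcast hnm)) hq0.le
      · simp only [hψdef, indicator_of_notMem hx]
        exact zero_le
    have hψle : ∀ (n : ℕ), ∀ x, ψ n x ≤ h x ^ q := by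
      intro n x
      by_cases hx : x ∈ Ioo (0:ℝ) (n:ℝ)
      · simp only [hψdef, indicator_of_mem hx]
        exact ENNReal.rpow_le_rpow (min_le_left _ _) hq0.le
      · simp only [hψdef, indicator_of_notMem hx]; exact zero_le
    have hψsup : ∀ x, x ∈ Ioi (0:ℝ) → (⨆ n, ψ n x) = h x ^ q := by
      intro x hx
      refine le_antisymm (iSup_le fun n => hψle n x) ?_
      by_cases hhx : h x = ∞
      · by_contra hcon
        push_neg at hcon
        set M := ⨆ n, ψ n x with hMdef
        have hMtop : M ≠ ∞ := (hcon.trans_le le_top).ne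
        have hM1 : M ^ (1/q) ≠ ∞ :=
          (ENNReal.rpow_lt_top_of_nonneg (by positivity) hMtop).ne
        obtain ⟨k, hk⟩ := ENNReal.exists_nat_gt hM1
        obtain ⟨k₂, hk₂⟩ := exists_nat_gt x
        set n := max k k₂ with hndef
        have hxn : x ∈ Ioo (0:ℝ) (n:ℝ) :=
          ⟨hx, lt_of_lt_of_le hk₂ (by exact_mod_cast Nat.le_max_right k k₂)⟩
        have hlt : M < ψ n x := by
          simp only [hψdef, indicator_of_mem hxn, hhx,
            min_eq_right (le_top : ((n:ℕ):ℝ≥0∞) ≤ ∞)]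
          have h2 : M ^ (1/q) < ((n:ℕ):ℝ≥0∞) :=
            lt_of_lt_of_le hk (Nat.cast_le.2 (Nat.le_max_left k k₂))
          calc M = (M ^ (1/q)) ^ q := by
                rw [← ENNReal.rpow_mul, one_div_mul_cancel hq0.ne', ENNReal.rpow_one]
            _ < ((n:ℕ):ℝ≥0∞) ^ q := ENNReal.rpow_lt_rpow h2 hq0
        exact hlt.not_ge (le_iSup (fun n => ψ n x) n)
      · obtain ⟨k, hk⟩ := ENNReal.exists_nat_gt hhx
        obtain ⟨k₂, hk₂⟩ := exists_nat_gt x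
        set n := max k k₂ with hndef
        have hxn : x ∈ Ioo (0:ℝ) (n:ℝ) :=
          ⟨hx, lt_of_lt_of_le hk₂ (by exact_mod_cast Nat.le_max_right k k₂)⟩
        have : ψ n x = h x ^ q := by
          rw [hψdef]
          simp only [indicator_of_mem hxn]
          rw [min_eq_left (hk.le.trans (Nat.cast_le.2 (Nat.le_max_left k k₂)))]
        exact le_iSup_of_le n this.ge
    set A : ℕ → ℝ≥0∞ := fun n => ∫⁻ x in Ioi (0:ℝ), ψ n x with hAdef
    have hAmono : Monotone A := fun n m hnm => lintegral_mono fun x => hψmono hnm x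
    have hAtop : ∀ n, A n ≠ ∞ := by
      intro n
      have hb : ∀ x, ψ n x ≤ (Ioo (0:ℝ) (n:ℝ)).indicator (fun _ => (n:ℝ≥0∞) ^ q) x := by
        intro x
        by_cases hx : x ∈ Ioo (0:ℝ) (n:ℝ)
        · simp only [hψdef, indicator_of_mem hx]
          exact ENNReal.rpow_le_rpow (min_le_right _ _) hq0.le
        · simp only [hψdef, indicator_of_notMem hx]; exact le_rfl
      have hle : A n ≤ (n:ℝ≥0∞) ^ q * volume (Ioo (0:ℝ) (n:ℝ) ∩ Ioi 0) := by
        calc A n ≤ ∫⁻ x in Ioi (0:ℝ),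
              (Ioo (0:ℝ) (n:ℝ)).indicator (fun _ => (n:ℝ≥0∞) ^ q) x := lintegral_mono hb
          _ = (n:ℝ≥0∞) ^ q * volume (Ioo (0:ℝ) (n:ℝ) ∩ Ioi 0) := by
              rw [lintegral_indicator measurableSet_Ioo,
                Measure.restrict_restrict measurableSet_Ioo, setLIntegral_const]
      refine (lt_of_le_of_lt hle (ENNReal.mul_lt_top ?_ ?_)).ne
      · exact ENNReal.rpow_lt_top_of_nonneg hq0.le (ENNReal.natCast_ne_top n)
      · exact lt_of_le_of_lt (measure_mono inter_subset_left) measure_Ioo_lt_top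
    have hAI : (⨆ n, A n) = I := by
      rw [hAdef, ← lintegral_iSup hψm hψmono, hIdef]
      exact setLIntegral_congr_fun measurableSet_Ioi hψsup
    have hstep : ∀ n : ℕ, A n ^ ((1-p)/p) ≤
        (⨆ (g : ℝ → ℝ≥0∞) (_ : Measurable g ∧
          ¬ (∀ᵐ x ∂(volume.restrict (Ioi (0:ℝ))), g x = 0)),
        (∫⁻ x in Ioi (0:ℝ), (g x * U x * h x) ^ p) ^ (1/p)
          / ∫⁻ x in Ioi (0:ℝ), g x * U x) := by
      intro n
      by_cases hA0 : A n = 0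
      · rw [hA0, ENNReal.zero_rpow_of_pos (by positivity)]; exact zero_le
      set g : ℝ → ℝ≥0∞ := fun x => ψ n x / U x with hgdef
      have hgm : Measurable g := (hψm n).div hUm
      have hgU : ∀ x, g x * U x = ψ n x := by
        intro x
        by_cases hx : x ∈ Ioo (0:ℝ) (n:ℝ)
        · obtain ⟨h0, ht⟩ := hU x hx.1
          exact ENNReal.div_mul_cancel h0 ht
        · have hz : ψ n x = 0 := indicator_of_notMem hx _
          rw [hgdef]; simp only []; rw [hz, ENNReal.zero_div, zero_mul]
      have hXg : ∫⁻ x in Ioi (0:ℝ), g x * U x = A n := by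
        rw [hAdef]; exact lintegral_congr fun x => by rw [hgU]
      have hgne : ¬ ∀ᵐ x ∂(volume.restrict (Ioi (0:ℝ))), g x = 0 := by
        intro hae
        have hz : ∫⁻ x in Ioi (0:ℝ), g x * U x = 0 := by
          have : ∀ᵐ x ∂(volume.restrict (Ioi (0:ℝ))), g x * U x = 0 :=
            hae.mono fun x hx => by rw [hx, zero_mul]
          rw [lintegral_congr_ae this, lintegral_zero]
        rw [hXg] at hz; exact hA0 hz
      have hYg : A n ≤ ∫⁻ x in Ioi (0:ℝ), (g x * U x * h x) ^ p := by
        rw [hAdef]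
        refine lintegral_mono fun x => ?_
        rw [hgU x]
        by_cases hx : x ∈ Ioo (0:ℝ) (n:ℝ)
        · simp only [hψdef, indicator_of_mem hx]
          set a := min (h x) ((n:ℕ):ℝ≥0∞) with hadef
          by_cases ha0 : a = 0
          · rw [ha0, ENNReal.zero_rpow_of_pos hq0]; exact zero_le
          · have hat : a ≠ ∞ :=
              (lt_of_le_of_lt (min_le_right _ _)
                (ENNReal.natCast_ne_top n).lt_top).ne
            have hqp : (q + 1) * p = q := by
              rw [hqdef]; field_simp; ring
            calc a ^ q = a ^ ((q+1)*p) := by rw [hqp]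
              _ = (a ^ (q+1)) ^ p := ENNReal.rpow_mul a _ _
              _ = (a ^ q * a) ^ p := by
                  rw [ENNReal.rpow_add _ _ ha0 hat, ENNReal.rpow_one]
              _ ≤ (a ^ q * h x) ^ p :=
                  ENNReal.rpow_le_rpow (mul_le_mul_right (min_le_left _ _) _) hp.le
        · have hz : ψ n x = 0 := indicator_of_notMem hx _
          rw [hz]; exact zero_le
      refine le_trans ?_ (le_iSup₂_of_le g ⟨hgm, hgne⟩ le_rfl)
      rw [hXg, ENNReal.le_div_iff_mul_le (Or.inl hA0) (Or.inl (hAtop n))]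
      have hmul : A n ^ ((1-p)/p) * A n = A n ^ (1/p) := by
        nth_rewrite 2 [← ENNReal.rpow_one (A n)]
        rw [← ENNReal.rpow_add _ _ hA0 (hAtop n)]
        congr 1
        field_simp
        ring
      rw [hmul]
      exact ENNReal.rpow_le_rpow hYg (by positivity)
    rw [hinv, ← hAI]
    have hc : Continuous (fun a : ℝ≥0∞ => a ^ ((1-p)/p)) := ENNReal.continuous_rpow_const
    have htnd : Tendsto (fun n => A n ^ ((1-p)/p)) atTop
        (nhds ((⨆ n, A n) ^ ((1-p)/p))) :=
      (hc.tendsto _).comp (tendsto_atTop_iSup hAmono)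
    exact le_of_tendsto htnd (Eventually.of_forall hstep)

end Core

section CoreOne

lemma core_p_eq_one (U h : ℝ → ℝ≥0∞) (hUm : Measurable U) (hhm : Measurable h)
    (hU : ∀ x ∈ Ioi (0:ℝ), U x ≠ 0 ∧ U x ≠ ∞) :
    (⨆ (g : ℝ → ℝ≥0∞) (_ : Measurable g ∧
        ¬ (∀ᵐ x ∂(volume.restrict (Ioi (0:ℝ))), g x = 0)),
      (∫⁻ x in Ioi (0:ℝ), (g x * U x * h x) ^ (1:ℝ)) ^ (1/(1:ℝ)) / ∫⁻ x in Ioi (0:ℝ), g x * U x)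
      = wNorm (dualExp 1) h (Ioi 0) := by
  have hde : dualExp 1 = ∞ := by rw [dualExp]; norm_num
  rw [hde, wNorm_top]
  set μ := volume.restrict (Ioi (0:ℝ)) with hμdef
  set E := essSup h μ with hEdef
  have hsimp : ∀ g : ℝ → ℝ≥0∞,
      (∫⁻ x in Ioi (0:ℝ), (g x * U x * h x) ^ (1:ℝ)) ^ (1/(1:ℝ))
        = ∫⁻ x in Ioi (0:ℝ), g x * U x * h x := by
    intro g; norm_num
  simp only [hsimp, ENNReal.rpow_one, div_one]
  apply le_antisymm
  · refine iSup_le fun g => iSup_le fun hg => ?_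
    refine ENNReal.div_le_of_le_mul ?_
    calc ∫⁻ x in Ioi (0:ℝ), g x * U x * h x
        ≤ ∫⁻ x in Ioi (0:ℝ), g x * U x * E := by
          refine lintegral_mono_ae ?_
          filter_upwards [ENNReal.ae_le_essSup (μ := μ) h] with x hx
          exact mul_le_mul_right hx _
      _ = E * ∫⁻ x in Ioi (0:ℝ), g x * U x := by
          rw [lintegral_mul_const (f := fun x => g x * U x) _ (hg.1.mul hUm), mul_comm]
  · refine le_of_forall_lt_imp_le_of_dense fun b hb => ?_
    have hSmeas : MeasurableSet {x : ℝ | b < h x} := measurableSet_lt measurable_const hhm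
    have hS0 : μ {x | b < h x} ≠ 0 := by
      intro h0
      have hae : h ≤ᵐ[μ] fun _ => b := by
        rw [EventuallyLE]
        rw [ae_iff]
        simpa [not_le] using h0
      exact absurd (essSup_le_of_ae_le b hae) (not_le.2 hb)
    have hSv : volume ({x | b < h x} ∩ Ioi 0) ≠ 0 := by
      rwa [hμdef, Measure.restrict_apply hSmeas] at hS0
    have hUn : ({x : ℝ | b < h x} ∩ Ioi 0) = ⋃ n : ℕ, ({x | b < h x} ∩ Ioo 0 n) := by
      ext x
      simp only [mem_inter_iff, mem_setOf_eq, mem_Ioi, mem_iUnion, mem_Ioo]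
      constructor
      · rintro ⟨h1, h2⟩
        obtain ⟨n, hn⟩ := exists_nat_gt x
        exact ⟨n, h1, h2, hn⟩
      · rintro ⟨n, h1, h2, _⟩
        exact ⟨h1, h2⟩
    obtain ⟨n, hn⟩ : ∃ n : ℕ, volume ({x | b < h x} ∩ Ioo 0 (n:ℝ)) ≠ 0 := by
      by_contra hall
      push_neg at hall
      exact hSv (by rw [hUn]; exact measure_iUnion_null hall)
    set S := {x : ℝ | b < h x} ∩ Ioo 0 (n:ℝ) with hSdef
    have hSm : MeasurableSet S := hSmeas.inter measurableSet_Ioo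
    have hSsub : S ⊆ Ioi 0 := fun x hx => hx.2.1
    set m := volume S with hmdef
    have hm0 : m ≠ 0 := hn
    have hmtop : m ≠ ∞ :=
      (lt_of_le_of_lt (measure_mono inter_subset_right) measure_Ioo_lt_top).ne
    set g : ℝ → ℝ≥0∞ := fun x => S.indicator (fun _ => 1) x / U x with hgdef
    have hgm : Measurable g := (measurable_const.indicator hSm).div hUm
    have hgU : ∀ x, g x * U x = S.indicator (fun _ => 1) x := by
      intro x
      by_cases hx : x ∈ S
      · show S.indicator (fun _ => 1) x / U x * U x = _
        rw [indicator_of_mem hx]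
        obtain ⟨h0, ht⟩ := hU x (hSsub hx)
        exact ENNReal.div_mul_cancel h0 ht
      · show S.indicator (fun _ => 1) x / U x * U x = _
        rw [indicator_of_notMem hx, ENNReal.zero_div, zero_mul]
    have hXg : ∫⁻ x in Ioi (0:ℝ), g x * U x = m := by
      simp_rw [hgU]
      rw [lintegral_indicator hSm, Measure.restrict_restrict hSm,
        inter_eq_self_of_subset_left hSsub, setLIntegral_one]
    have hgne : ¬ ∀ᵐ x ∂(volume.restrict (Ioi (0:ℝ))), g x = 0 := by
      intro hae
      have hz : ∫⁻ x in Ioi (0:ℝ), g x * U x = 0 := by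
        have : ∀ᵐ x ∂(volume.restrict (Ioi (0:ℝ))), g x * U x = 0 :=
          hae.mono fun x hx => by rw [hx, zero_mul]
        rw [lintegral_congr_ae this, lintegral_zero]
      rw [hXg] at hz; exact hm0 hz
    refine le_iSup₂_of_le g ⟨hgm, hgne⟩ ?_
    rw [hXg, ENNReal.le_div_iff_mul_le (Or.inl hm0) (Or.inl hmtop)]
    calc b * m = ∫⁻ x in Ioi (0:ℝ), S.indicator (fun _ => b) x := by
          rw [lintegral_indicator hSm, Measure.restrict_restrict hSm,
            inter_eq_self_of_subset_left hSsub, setLIntegral_const]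
      _ ≤ ∫⁻ x in Ioi (0:ℝ), g x * U x * h x := by
          refine lintegral_mono fun x => ?_
          rw [hgU x]
          by_cases hx : x ∈ S
          · rw [indicator_of_mem hx, indicator_of_mem hx, one_mul]
            exact (hx.1 : b < h x).le
          · rw [indicator_of_notMem hx, indicator_of_notMem hx, zero_mul]

end CoreOne

section Key

lemma key_eq (p : ℝ) (hp : 0 < p) (hp1 : p ≤ 1)
    (u v w : ℝ → ℝ≥0∞) (hv : IsWeightOn v) (hu : MemOmegaDual 1 u)
    (hw : MemOmega (ENNReal.ofReal p) w) (f : ℝ → ℝ≥0∞) (hf : Measurable f)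
    (U W h : ℝ → ℝ≥0∞)
    (hUeq : ∀ x, U x = ∫⁻ t in Ioo (0:ℝ) x, u t)
    (hWeq : ∀ x, W x = ∫⁻ t in Ioi x, w t ^ p)
    (hheq : ∀ x, h x = f x * ((U x)⁻¹ * W x ^ (1/p) * v x)) :
    multNorm (copsonNorm 1 1 u (fun _ => 1))
        (cesaroNorm (ENNReal.ofReal p) (ENNReal.ofReal p) w v) f
      = wNorm (dualExp p) h (Ioi 0) := by
  have hUm : Measurable U := by
    have hmono : Monotone U := by
      intro a b hab
      rw [hUeq, hUeq]
      exact lintegral_mono_set (Ioo_subset_Ioo_right hab)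
    exact hmono.measurable
  have hWm : Measurable W := by
    have hanti : Antitone W := by
      intro a b hab
      rw [hWeq, hWeq]
      exact lintegral_mono_set (Ioi_subset_Ioi hab)
    exact hanti.measurable
  have hhm : Measurable h := by
    have : h = fun x => f x * ((U x)⁻¹ * W x ^ (1/p) * v x) := funext hheq
    rw [this]
    exact hf.mul ((hUm.inv.mul (hWm.pow_const _)).mul hv.1)
  have hU : ∀ x ∈ Ioi (0:ℝ), U x ≠ 0 ∧ U x ≠ ∞ := by
    intro x hx
    have h2 := hu.2 x hx
    rw [wNorm_one] at h2
    rw [hUeq]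
    exact ⟨h2.1.ne', h2.2.ne⟩
  have hbody : ∀ g : ℝ → ℝ≥0∞, Measurable g →
      (cesaroNorm (ENNReal.ofReal p) (ENNReal.ofReal p) w v (fun x => f x * g x)) /
        (copsonNorm 1 1 u (fun _ => 1) g)
      = (∫⁻ x in Ioi (0:ℝ), (g x * U x * h x) ^ p) ^ (1/p)
          / ∫⁻ x in Ioi (0:ℝ), g x * U x := by
    intro g hg
    rw [copson_repr u hu.1 g hg, cesaro_repr hp w v (fun x => f x * g x) hw.1 hv.1 (hf.mul hg)]
    congr 1
    · congr 1
      refine setLIntegral_congr_fun measurableSet_Ioi (fun x hx => ?_)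
      obtain ⟨hU0, hUt⟩ := hU x hx
      show (f x * g x * v x) ^ p * ∫⁻ t in Ioi x, w t ^ p = (g x * U x * h x) ^ p
      rw [hheq x, ← hWeq x]
      have hkey : g x * U x * (f x * ((U x)⁻¹ * W x ^ (1/p) * v x))
          = (f x * g x * v x) * W x ^ (1/p) := by
        have hc : U x * (U x)⁻¹ = 1 := ENNReal.mul_inv_cancel hU0 hUt
        calc g x * U x * (f x * ((U x)⁻¹ * W x ^ (1/p) * v x))
            = (U x * (U x)⁻¹) * ((f x * g x * v x) * W x ^ (1/p)) := by ring
          _ = (f x * g x * v x) * W x ^ (1/p) := by rw [hc, one_mul]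
      rw [hkey, ENNReal.mul_rpow_of_nonneg (f x * g x * v x) (W x ^ (1/p)) hp.le,
        ← ENNReal.rpow_mul, one_div, inv_mul_cancel₀ hp.ne', ENNReal.rpow_one]
    · refine setLIntegral_congr_fun measurableSet_Ioi (fun x hx => ?_)
      rw [hUeq x]
  calc multNorm (copsonNorm 1 1 u (fun _ => 1))
        (cesaroNorm (ENNReal.ofReal p) (ENNReal.ofReal p) w v) f
      = ⨆ (g : ℝ → ℝ≥0∞) (_ : Measurable g ∧
          ¬ (∀ᵐ x ∂(volume.restrict (Ioi (0:ℝ))), g x = 0)),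
        (∫⁻ x in Ioi (0:ℝ), (g x * U x * h x) ^ p) ^ (1/p)
          / ∫⁻ x in Ioi (0:ℝ), g x * U x := by
        rw [multNorm]
        refine iSup_congr fun g => ?_
        by_cases hg : Measurable g ∧
            ¬ (∀ᵐ x ∂(volume.restrict (Ioi (0:ℝ))), g x = 0)
        · rw [iSup_pos hg, iSup_pos hg, hbody g hg.1]
        · rw [iSup_neg hg, iSup_neg hg]
    _ = wNorm (dualExp p) h (Ioi 0) := by
        rcases eq_or_lt_of_le hp1 with hpe | hplt
        · subst hpe
          exact core_p_eq_one U h hUm hhm hU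
        · exact core_p_lt_one p hp hplt U h hUm hhm hU

end Key


/-- Multipliers from `Cop₁(u)` to `Ces_{p,p}(w,v)` for `0 < p ≤ 1`:
`‖f‖_{M(Cop₁(u), Ces_{p,p}(w,v))} ≈ ‖f·ω‖_{p',(0,∞)}` where
`ω(x) = (∫_0^x u)⁻¹ (∫_x^∞ w^p)^{1/p} v(x)`, with constants depending only on `p`. -/
theorem multiplier_q_eq_p_le_r_eq_one (p : ℝ) (hp : 0 < p) (hp1 : p ≤ 1) :
    ∃ c C : ℝ≥0∞, 0 < c ∧ c < ∞ ∧ 0 < C ∧ C < ∞ ∧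
      ∀ u v w : ℝ → ℝ≥0∞, IsWeightOn v → MemOmegaDual 1 u →
        MemOmega (ENNReal.ofReal p) w →
        ∀ f : ℝ → ℝ≥0∞, Measurable f →
          let ω : ℝ → ℝ≥0∞ := fun x =>
            (∫⁻ t in Ioo (0:ℝ) x, u t)⁻¹ * (∫⁻ t in Ioi x, w t ^ p) ^ (1 / p) * v x
          let lhs := multNorm (copsonNorm 1 1 u (fun _ => 1))
            (cesaroNorm (ENNReal.ofReal p) (ENNReal.ofReal p) w v) f
          let rhs := wNorm (dualExp p) (fun x => f x * ω x) (Ioi 0)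
          c * rhs ≤ lhs ∧ lhs ≤ C * rhs := by
  refine ⟨1, 1, zero_lt_one, ENNReal.one_lt_top, zero_lt_one, ENNReal.one_lt_top, ?_⟩
  intro u v w hv hu hw f hf
  intro ω lhs rhs
  have hkey := key_eq p hp hp1 u v w hv hu hw f hf
    (fun x => ∫⁻ t in Ioo (0:ℝ) x, u t) (fun x => ∫⁻ t in Ioi x, w t ^ p)
    (fun x => f x * ω x) (fun _ => rfl) (fun _ => rfl) (fun _ => rfl)
  exact ⟨by rw [one_mul]; exact hkey.ge, by rw [one_mul]; exact hkey.le⟩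
end

section
/- Let 0 < p ≤ 1 ≤ q < ∞ with p ≠ q, let v be a weight on (0,∞), u ∈ Ω̃₁ and w ∈ Ω_q. Define ω₂(x) := (∫_0^x u(t) dt)^{−1} v(x). Then for every nonnegative measurable f on (0,∞), ‖f‖_{M(Cop₁(u), Ces_{p,q}(w,v))} ≈ sup_{t∈(0,∞)} (∫_t^∞ w(s)^q ds)^{1/q} ‖f·ω₂‖_{p',(0,t)}, with equivalence constants depending only on p and q. -/
open MeasureTheory ENNReal Set Filter NNReal Topology

section MultAux
open Topology




noncomputable def mauxDp (p : ℝ) (h : ℝ → ℝ≥0∞) (t : ℝ) : ℝ≥0∞ :=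
  if p = 1 then essSup h (volume.restrict (Ioo 0 t))
  else (∫⁻ x in Ioo (0:ℝ) t, h x ^ (p/(1-p))) ^ ((1-p)/p)

lemma maux_wNorm_one (g : ℝ → ℝ≥0∞) (s : Set ℝ) : wNorm 1 g s = ∫⁻ x in s, g x := by
  simp [wNorm, ENNReal.one_ne_top]

lemma maux_wNorm_ofReal {q : ℝ} (hq : 0 < q) (g : ℝ → ℝ≥0∞) (s : Set ℝ) :
    wNorm (ENNReal.ofReal q) g s = (∫⁻ x in s, g x ^ q) ^ (1/q) := by
  rw [wNorm, if_neg ENNReal.ofReal_ne_top, ENNReal.toReal_ofReal hq.le]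

lemma maux_Dp_eq {p : ℝ} (hp : 0 < p) (hp1 : p ≤ 1) (h : ℝ → ℝ≥0∞) (t : ℝ) :
    wNorm (dualExp p) h (Ioo 0 t) = mauxDp p h t := by
  rcases eq_or_lt_of_le hp1 with h1 | h1
  · subst h1
    rw [mauxDp, if_pos rfl, dualExp, if_neg (lt_irrefl _), if_pos rfl, wNorm, if_pos rfl]
  · rw [mauxDp, if_neg h1.ne, dualExp, if_pos h1, wNorm, if_neg ENNReal.ofReal_ne_top,
      ENNReal.toReal_ofReal (div_nonneg hp.le (by linarith)), one_div_div]

lemma maux_rpow_pos {x : ℝ≥0∞} (hx : 0 < x) {r : ℝ} (hr : 0 < r) : 0 < x ^ r := by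
  rcases eq_or_ne x ∞ with h | h
  · rw [h, ENNReal.top_rpow_of_pos hr]; simp
  · exact ENNReal.rpow_pos hx h

lemma maux_tsum_rpow {q : ℝ} (hq : 1 ≤ q) (a : ℤ → ℝ≥0∞) :
    ∑' k, a k ^ q ≤ (∑' k, a k) ^ q := by
  have hq0 : (0:ℝ) < q := by linarith
  rcases eq_or_lt_of_le hq with h1 | h1
  · simp [← h1]
  set S := ∑' k, a k with hS
  by_cases hStop : S = ∞
  · rw [hStop, ENNReal.top_rpow_of_pos hq0]; exact le_top
  have key : ∀ k, a k ^ q ≤ S ^ (q-1) * a k := by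
    intro k
    have hak : a k ≤ S := ENNReal.le_tsum k
    have hfin : a k ≠ ∞ := fun h => hStop (top_le_iff.mp (h ▸ hak))
    by_cases h0 : a k = 0
    · simp [h0, ENNReal.zero_rpow_of_pos hq0]
    · have e1 : a k ^ (q-1) * a k ^ (1:ℝ) = a k ^ q := by
        rw [← ENNReal.rpow_add _ _ h0 hfin]; norm_num
      rw [ENNReal.rpow_one] at e1
      rw [← e1]
      exact mul_le_mul_left (ENNReal.rpow_le_rpow hak (by linarith)) _
  calc ∑' k, a k ^ q ≤ ∑' k, S ^ (q-1) * a k := ENNReal.tsum_le_tsum key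
    _ = S ^ (q-1) * S := by rw [ENNReal.tsum_mul_left]
    _ ≤ S ^ q := by
        by_cases hS0 : S = 0
        · simp [hS0]
        · have e1 : S ^ (q-1) * S ^ (1:ℝ) = S ^ q := by
            rw [← ENNReal.rpow_add _ _ hS0 hStop]; norm_num
          rw [ENNReal.rpow_one] at e1
          rw [e1]



lemma maux_block {p : ℝ} (hp : 0 < p) (hp1 : p ≤ 1) {h η : ℝ → ℝ≥0∞}
    (hh : Measurable h) (hη : Measurable η) {a b : ℝ} (ha : 0 ≤ a) :
    ∫⁻ x in Ioc a b, (h x * η x) ^ p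
      ≤ mauxDp p h b ^ p * (∫⁻ x in Ioc a b, η x) ^ p := by
  have hIoc : (volume : Measure ℝ).restrict (Ioo a b) = volume.restrict (Ioc a b) :=
    Measure.restrict_congr_set Ioo_ae_eq_Ioc
  rw [← hIoc]
  have hsub : Ioo a b ⊆ Ioo 0 b := fun x hx => ⟨lt_of_le_of_lt ha hx.1, hx.2⟩
  rcases eq_or_lt_of_le hp1 with h1 | h1
  · -- p = 1
    subst h1
    rw [mauxDp, if_pos rfl]
    simp only [ENNReal.rpow_one]
    set D := essSup h (volume.restrict (Ioo 0 b)) with hD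
    have hae : ∀ᵐ x ∂(volume.restrict (Ioo a b)), h x ≤ D :=
      ae_restrict_of_ae_restrict_of_subset hsub (ENNReal.ae_le_essSup h)
    calc ∫⁻ x in Ioo a b, h x * η x ≤ ∫⁻ x in Ioo a b, D * η x := by
          refine lintegral_mono_ae (hae.mono fun x hx => ?_)
          exact mul_le_mul_left hx _
      _ = D * ∫⁻ x in Ioo a b, η x := lintegral_const_mul D hη
  · -- p < 1
    rw [mauxDp, if_neg h1.ne]
    have hconj : (1/(1-p)).HolderConjugate (1/p) := by
      rw [Real.holderConjugate_iff]; constructor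
      · rw [lt_div_iff₀ (by linarith)]; linarith
      · rw [one_div, one_div, inv_inv, inv_inv]; ring
    have hH := ENNReal.lintegral_mul_le_Lp_mul_Lq (volume.restrict (Ioo a b)) hconj
      ((hh.pow_const p).aemeasurable) ((hη.pow_const p).aemeasurable)
    have e0 : ∀ x : ℝ, ((fun x => h x ^ p) * fun x => η x ^ p) x = (h x * η x) ^ p := by
      intro x; simp [ENNReal.mul_rpow_of_nonneg _ _ hp.le]
    rw [lintegral_congr e0] at hH
    have e1 : ∀ x : ℝ, (h x ^ p) ^ (1/(1-p)) = h x ^ (p/(1-p)) := by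
      intro x; rw [← ENNReal.rpow_mul]; ring_nf
    have e2 : ∀ x : ℝ, (η x ^ p) ^ (1/p) = η x := by
      intro x; rw [← ENNReal.rpow_mul, mul_one_div_cancel hp.ne', ENNReal.rpow_one]
    simp only [e1, e2] at hH
    rw [one_div_one_div, one_div_one_div] at hH
    refine hH.trans ?_
    have h3 : (∫⁻ x in Ioo a b, h x ^ (p/(1-p))) ^ (1-p)
        ≤ ((∫⁻ x in Ioo (0:ℝ) b, h x ^ (p/(1-p))) ^ ((1-p)/p)) ^ p := by
      rw [← ENNReal.rpow_mul, div_mul_cancel₀ _ hp.ne']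
      exact ENNReal.rpow_le_rpow (lintegral_mono_set hsub) (by linarith)
    exact mul_le_mul_left h3 _

lemma maux_fubini {u g : ℝ → ℝ≥0∞} (hu : Measurable u) (hg : Measurable g) :
    ∫⁻ t in Ioi (0:ℝ), (∫⁻ x in Ioi t, g x) * u t
      = ∫⁻ x in Ioi (0:ℝ), g x * ∫⁻ t in Ioo 0 x, u t := by
  classical
  have hFm : Measurable (Function.uncurry
      (fun t x => if 0 < t ∧ t < x then u t * g x else (0:ℝ≥0∞)) : ℝ × ℝ → ℝ≥0∞) := by
    have hset : MeasurableSet {z : ℝ × ℝ | 0 < z.1 ∧ z.1 < z.2} :=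
      (measurableSet_lt measurable_const measurable_fst).inter
        (measurableSet_lt measurable_fst measurable_snd)
    exact Measurable.ite hset ((hu.comp measurable_fst).mul (hg.comp measurable_snd))
      measurable_const
  have step1 : ∫⁻ t in Ioi (0:ℝ), (∫⁻ x in Ioi t, g x) * u t
      = ∫⁻ t, ∫⁻ x, (if 0 < t ∧ t < x then u t * g x else 0) := by
    rw [← lintegral_indicator measurableSet_Ioi]
    congr 1; funext t
    by_cases ht : 0 < t
    · have e : ∀ x : ℝ, (if 0 < t ∧ t < x then u t * g x else 0)
          = (Ioi t).indicator (fun x => u t * g x) x := by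
        intro x
        by_cases hx : t < x
        · rw [if_pos ⟨ht, hx⟩, Set.indicator_of_mem (show x ∈ Ioi t from hx)]
        · rw [if_neg (fun h => hx h.2), Set.indicator_of_notMem (show x ∉ Ioi t from hx)]
      rw [Set.indicator_of_mem (show t ∈ Ioi (0:ℝ) from ht), lintegral_congr e,
        lintegral_indicator measurableSet_Ioi, lintegral_const_mul _ hg, mul_comm]
    · have e : ∀ x : ℝ, (if 0 < t ∧ t < x then u t * g x else 0) = 0 := by
        intro x; rw [if_neg (fun h => ht h.1)]
      rw [Set.indicator_of_notMem (show t ∉ Ioi (0:ℝ) from ht), lintegral_congr e,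
        lintegral_zero]
  have step2 : (∫⁻ x, ∫⁻ t, (if 0 < t ∧ t < x then u t * g x else 0))
      = ∫⁻ x in Ioi (0:ℝ), g x * ∫⁻ t in Ioo 0 x, u t := by
    rw [← lintegral_indicator measurableSet_Ioi]
    congr 1; funext x
    have e1 : ∀ t : ℝ, (if 0 < t ∧ t < x then u t * g x else 0)
        = (Ioo 0 x).indicator (fun t => u t * g x) t := by
      intro t
      by_cases ht : 0 < t ∧ t < x
      · rw [if_pos ht, Set.indicator_of_mem (show t ∈ Ioo 0 x from ⟨ht.1, ht.2⟩)]
      · rw [if_neg ht, Set.indicator_of_notMem (show t ∉ Ioo 0 x from fun h => ht ⟨h.1, h.2⟩)]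
    rw [lintegral_congr e1, lintegral_indicator measurableSet_Ioo, lintegral_mul_const _ hu]
    by_cases hx : 0 < x
    · rw [Set.indicator_of_mem (show x ∈ Ioi (0:ℝ) from hx), mul_comm]
    · rw [Set.indicator_of_notMem (show x ∉ Ioi (0:ℝ) from hx), Ioo_eq_empty hx]
      simp
  rw [step1, lintegral_lintegral_swap hFm.aemeasurable, step2]


lemma maux_tail {q : ℝ} (hq0 : 0 < q) {w : ℝ → ℝ≥0∞} (hw : Measurable w) {t : ℝ} (ht : 0 < t)
    {Φ : ℝ → ℝ≥0∞} (K : ℝ≥0∞) (hΦ : ∀ s, t < s → K ≤ Φ s) :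
    (∫⁻ s in Ioi t, w s ^ q) ^ (1/q) * K
      ≤ (∫⁻ s in Ioi (0:ℝ), (Φ s * w s) ^ q) ^ (1/q) := by
  calc (∫⁻ s in Ioi t, w s ^ q) ^ (1/q) * K
      = (∫⁻ s in Ioi t, (K * w s) ^ q) ^ (1/q) := by
        have e1 : ∫⁻ s in Ioi t, (K * w s) ^ q = K ^ q * ∫⁻ s in Ioi t, w s ^ q := by
          simp_rw [ENNReal.mul_rpow_of_nonneg _ _ hq0.le]
          exact lintegral_const_mul _ (hw.pow_const q)
        rw [e1, ENNReal.mul_rpow_of_nonneg _ _ (by positivity : (0:ℝ) ≤ 1/q),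
          ← ENNReal.rpow_mul, mul_one_div_cancel hq0.ne', ENNReal.rpow_one, mul_comm]
    _ ≤ (∫⁻ s in Ioi t, (Φ s * w s) ^ q) ^ (1/q) := by
        refine ENNReal.rpow_le_rpow (lintegral_mono_ae ((ae_restrict_iff'
          measurableSet_Ioi).mpr (ae_of_all _ fun s hs => ?_))) (by positivity)
        exact ENNReal.rpow_le_rpow (mul_le_mul_left (hΦ s hs) _) hq0.le
    _ ≤ (∫⁻ s in Ioi (0:ℝ), (Φ s * w s) ^ q) ^ (1/q) :=
        ENNReal.rpow_le_rpow (lintegral_mono_set (Ioi_subset_Ioi ht.le)) (by positivity)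






lemma maux_upper {p q : ℝ} (hp : 0 < p) (hp1 : p ≤ 1) (hq1 : 1 ≤ q)
    {w h η : ℝ → ℝ≥0∞} (hw : Measurable w) (hh : Measurable h) (hη : Measurable η)
    (hWpos : ∀ t : ℝ, 0 < t → 0 < ∫⁻ s in Ioi t, w s ^ q)
    {B : ℝ≥0∞}
    (hB : ∀ t : ℝ, 0 < t → (∫⁻ s in Ioi t, w s ^ q) ^ (1/q) * mauxDp p h t ≤ B)
    (hBfin : B ≠ ∞) (hGfin : (∫⁻ x in Ioi (0:ℝ), η x) ≠ ∞) :
    ∫⁻ t in Ioi (0:ℝ), ((∫⁻ x in Ioo 0 t, (h x * η x) ^ p) ^ (1/p) * w t) ^ q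
      ≤ ((4 * ((2:ℝ≥0∞) ^ p - 1) ^ (-(1/p))) * B * ∫⁻ x in Ioi (0:ℝ), η x) ^ q := by
  classical
  have hp0 : p ≠ 0 := hp.ne'
  have hq0 : (0:ℝ) < q := by linarith
  have h2t : (2:ℝ≥0∞) ≠ ⊤ := ENNReal.ofNat_ne_top
  have h20 : (2:ℝ≥0∞) ≠ 0 := (by simp : (2:ℝ≥0∞) ≠ 0)
  -- the dyadic ratio r = 2^p and the constant c = (2^p - 1)^(1/p)
  set r : ℝ≥0∞ := (2:ℝ≥0∞) ^ p with hrdef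
  have hr1 : 1 < r := by
    have := ENNReal.rpow_lt_rpow_of_exponent_lt (x := 2) one_lt_two h2t hp
    simpa using this.trans_le le_rfl
  have hrt : r ≠ ⊤ := by
    exact (ENNReal.rpow_lt_top_of_nonneg hp.le h2t).ne
  set c : ℝ≥0∞ := (r - 1) ^ (1/p) with hcdef
  have hrm1pos : 0 < r - 1 := by
    rw [tsub_pos_iff_lt]; exact hr1
  have hrm1t : r - 1 ≠ ⊤ := by
    exact ne_top_of_le_ne_top hrt (tsub_le_self)
  have hc0 : c ≠ 0 := (ENNReal.rpow_pos hrm1pos hrm1t).ne'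
  have hct : c ≠ ⊤ := (ENNReal.rpow_lt_top_of_nonneg (by positivity) hrm1t).ne
  -- the measure ν with density (hη)^p and its "distribution function" F
  set φ : ℝ → ℝ≥0∞ := fun x => (h x * η x) ^ p with hφdef
  have hφm : Measurable φ := (hh.mul hη).pow_const p
  set ν : Measure ℝ := volume.withDensity φ with hνdef
  have hνap : ∀ s : Set ℝ, MeasurableSet s → ν s = ∫⁻ x in s, φ x := fun s hs =>
    withDensity_apply φ hs
  set G : ℝ≥0∞ := ∫⁻ x in Ioi (0:ℝ), η x with hGdef
  set F : ℝ → ℝ≥0∞ := fun t => ν (Ioc 0 t) with hFdef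
  have hFmono : Monotone F := fun s t hst => measure_mono (Ioc_subset_Ioc_right hst)
  have hFmeas : Measurable F := hFmono.measurable
  have hDfin : ∀ t : ℝ, 0 < t → mauxDp p h t ≠ ∞ := by
    intro t ht hcon
    have h1 := hB t ht
    rw [hcon] at h1
    have h2 : (∫⁻ s in Ioi t, w s ^ q) ^ (1/q) ≠ 0 :=
      (maux_rpow_pos (hWpos t ht) (by positivity)).ne'
    rw [ENNReal.mul_top h2] at h1
    exact hBfin (top_le_iff.mp h1)
  have hFle : ∀ t : ℝ, 0 < t → F t ≤ mauxDp p h t ^ p * G ^ p := by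
    intro t ht
    have h1 : F t = ∫⁻ x in Ioc 0 t, φ x := hνap _ measurableSet_Ioc
    rw [h1]
    refine (maux_block hp hp1 hh hη le_rfl).trans ?_
    exact mul_le_mul_right (ENNReal.rpow_le_rpow
      (lintegral_mono_set Ioc_subset_Ioi_self) hp.le) _
  have hFfin : ∀ t : ℝ, F t ≠ ∞ := by
    intro t
    rcases le_or_gt t 0 with ht | ht
    · have : Ioc (0:ℝ) t = ∅ := Ioc_eq_empty (fun hlt => absurd ht (not_le.mpr hlt))
      simp [hFdef, this]
    · refine ne_top_of_le_ne_top ?_ (hFle t ht)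
      exact (ENNReal.mul_lt_top
        (ENNReal.rpow_lt_top_of_nonneg hp.le (hDfin t ht))
        (ENNReal.rpow_lt_top_of_nonneg hp.le hGfin)).ne
  -- dyadic thresholds
  set β : ℤ → ℝ≥0∞ := fun k => (2:ℝ≥0∞) ^ ((k:ℝ) * p) with hβdef
  have hβ0 : ∀ k, β k ≠ 0 := fun k => by
    simp [hβdef, ENNReal.rpow_eq_zero_iff, h20, h2t]
  have hβt : ∀ k, β k ≠ ⊤ := fun k => by
    simp [hβdef, ENNReal.rpow_eq_top_iff, h20, h2t]
  have hβmono : ∀ {k l : ℤ}, k ≤ l → β k ≤ β l := by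
    intro k l hkl
    exact ENNReal.rpow_le_rpow_of_exponent_le one_le_two
      (mul_le_mul_of_nonneg_right (by exact_mod_cast hkl) hp.le)
  have hβsucc : ∀ k : ℤ, β (k+1) = β k * r := by
    intro k
    rw [hβdef, hrdef]
    rw [← ENNReal.rpow_add _ _ h20 h2t]
    congr 1
    push_cast; ring_nf
  have hβrpow : ∀ k : ℤ, β k ^ (1/p) = (2:ℝ≥0∞) ^ (k:ℝ) := by
    intro k
    rw [hβdef, ← ENNReal.rpow_mul]
    congr 1
    field_simp
  -- the sets S k and the stopping points τ k
  set S : ℤ → Set ℝ := fun k => {t : ℝ | 0 < t ∧ β k ≤ F t} with hSdef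
  set τ : ℤ → ℝ := fun k => sInf (S k) with hτdef
  have hSsub : ∀ {k l : ℤ}, k ≤ l → S l ⊆ S k := by
    intro k l hkl t ht
    exact ⟨ht.1, le_trans (hβmono hkl) ht.2⟩
  have hF0 : Tendsto (fun n : ℕ => F (1/(n+1))) atTop (𝓝 0) := by
    have hint : ⋂ n : ℕ, Ioc (0:ℝ) (1/(n+1)) = ∅ := by
      ext x
      simp only [mem_iInter, mem_Ioc, mem_empty_iff_false, iff_false, not_forall]
      by_cases hx : 0 < x
      · obtain ⟨n, hn⟩ := exists_nat_one_div_lt hx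
        exact ⟨n, fun hcon => absurd hcon.2 (not_le.mpr hn)⟩
      · exact ⟨0, fun hcon => hx hcon.1⟩
    have htend := tendsto_measure_iInter_atTop (μ := ν)
      (fun n => measurableSet_Ioc.nullMeasurableSet)
      (fun n m hnm => Ioc_subset_Ioc_right (by
        have h1 : 1/((m:ℝ)+1) ≤ 1/((n:ℝ)+1) :=
          one_div_le_one_div_of_le (by positivity) (by exact_mod_cast Nat.succ_le_succ hnm)
        linarith))
      ⟨0, hFfin _⟩
    rw [hint] at htend
    simpa [hFdef, Function.comp_def] using htend
  have hlb : ∀ k : ℤ, ∃ t₀ : ℝ, 0 < t₀ ∧ t₀ ∉ S k ∧ ∀ s ∈ S k, t₀ ≤ s := by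
    intro k
    have hev : ∀ᶠ n : ℕ in atTop, F (1/(n+1)) < β k :=
      hF0.eventually_lt_const (lt_of_le_of_ne (zero_le) (Ne.symm (hβ0 k)))
    obtain ⟨n, hn⟩ := hev.exists
    refine ⟨1/(n+1), by positivity, ?_, ?_⟩
    · intro hmem
      exact absurd hn (not_lt.mpr hmem.2)
    · intro s hs
      by_contra hcon
      push_neg at hcon
      exact absurd (lt_of_le_of_lt hs.2 (lt_of_le_of_lt (hFmono hcon.le) hn)) (lt_irrefl _)
  have hbdd : ∀ k : ℤ, BddBelow (S k) := by
    intro k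
    obtain ⟨t₀, _, _, hl⟩ := hlb k
    exact ⟨t₀, fun s hs => hl s hs⟩
  have hτpos : ∀ k : ℤ, (S k).Nonempty → 0 < τ k := by
    intro k hne
    obtain ⟨t₀, ht₀, _, hl⟩ := hlb k
    exact lt_of_lt_of_le ht₀ (le_csInf hne hl)
  have hτle : ∀ k : ℤ, ∀ s ∈ S k, τ k ≤ s := fun k s hs => csInf_le (hbdd k) hs
  have hτmono : ∀ {k l : ℤ}, k ≤ l → (S l).Nonempty → τ k ≤ τ l := by
    intro k l hkl hne
    exact csInf_le_csInf (hbdd k) hne (hSsub hkl)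
  have hup : ∀ k : ℤ, ν (Ioc 0 (τ k)) ≤ β k := by
    intro k
    have hsing : ν {τ k} = 0 := by
      rw [hνdef, withDensity_apply _ (measurableSet_singleton _)]
      exact setLIntegral_measure_zero _ _ (measure_singleton _)
    have hIoo : ν (Ioo 0 (τ k)) ≤ β k := by
      have hun : Ioo (0:ℝ) (τ k) = ⋃ n : ℕ, Ioc 0 (τ k - 1/(n+1)) := by
        ext x
        simp only [mem_Ioo, mem_iUnion, mem_Ioc]
        constructor
        · rintro ⟨hx0, hxτ⟩
          obtain ⟨n, hn⟩ := exists_nat_one_div_lt (sub_pos.mpr hxτ)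
          exact ⟨n, hx0, by linarith⟩
        · rintro ⟨n, hx0, hxn⟩
          have hpos : (0:ℝ) < 1/(n+1) := by positivity
          exact ⟨hx0, by linarith⟩
      have hmono2 : Monotone (fun n : ℕ => Ioc (0:ℝ) (τ k - 1/(n+1))) := by
        intro n m hnm
        refine Ioc_subset_Ioc_right ?_
        have h1 : 1/((m:ℝ)+1) ≤ 1/((n:ℝ)+1) :=
          one_div_le_one_div_of_le (by positivity) (by exact_mod_cast Nat.succ_le_succ hnm)
        linarith
      rw [hun, hmono2.measure_iUnion]
      refine iSup_le fun n => ?_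
      rcases le_or_gt (τ k - 1/(n+1)) 0 with hle | hlt
      · rw [Ioc_eq_empty (not_lt.mpr hle)]
        simp
      · have hnotmem : (τ k - 1/(n+1)) ∉ S k := by
          intro hmem
          have h2 := hτle k _ hmem
          have hpos : (0:ℝ) < 1/(n+1) := by positivity
          linarith
        have h3 : ¬ (β k ≤ F (τ k - 1/(n+1))) := fun hcon => hnotmem ⟨hlt, hcon⟩
        exact (not_le.mp h3).le
    calc ν (Ioc 0 (τ k)) ≤ ν (Ioo 0 (τ k) ∪ {τ k}) := by
          refine measure_mono ?_
          intro x hx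
          rcases eq_or_lt_of_le hx.2 with he | hlt
          · exact Or.inr (by simp [he])
          · exact Or.inl ⟨hx.1, hlt⟩
      _ ≤ ν (Ioo 0 (τ k)) + ν {τ k} := measure_union_le _ _
      _ ≤ β k + 0 := add_le_add hIoo hsing.le
      _ = β k := add_zero _
  have hlow : ∀ k : ℤ, (S k).Nonempty → β k ≤ ν (Ioc 0 (τ k)) := by
    intro k hne
    have hint : ⋂ n : ℕ, Ioc (0:ℝ) (τ k + 1/(n+1)) = Ioc 0 (τ k) := by
      ext x
      simp only [mem_iInter, mem_Ioc]
      constructor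
      · intro hall
        refine ⟨(hall 0).1, ?_⟩
        by_contra hcon
        push_neg at hcon
        obtain ⟨n, hn⟩ := exists_nat_one_div_lt (sub_pos.mpr hcon)
        have := (hall n).2
        linarith
      · rintro ⟨hx0, hxτ⟩ n
        have hpos : (0:ℝ) < 1/(n+1) := by positivity
        exact ⟨hx0, by linarith⟩
    have hanti : Antitone (fun n : ℕ => Ioc (0:ℝ) (τ k + 1/(n+1))) := by
      intro n m hnm
      refine Ioc_subset_Ioc_right ?_
      have h1 : 1/((m:ℝ)+1) ≤ 1/((n:ℝ)+1) :=
        one_div_le_one_div_of_le (by positivity) (by exact_mod_cast Nat.succ_le_succ hnm)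
      linarith
    have htend := tendsto_measure_iInter_atTop (μ := ν)
      (fun n => measurableSet_Ioc.nullMeasurableSet) hanti ⟨0, hFfin _⟩
    rw [hint] at htend
    refine ge_of_tendsto htend (Eventually.of_forall fun n => ?_)
    have hlt : τ k < τ k + 1/(n+1) := by
      have hpos : (0:ℝ) < 1/(n+1) := by positivity
      linarith
    obtain ⟨s, hsS, hs⟩ := (csInf_lt_iff (hbdd k) hne).mp hlt
    calc β k ≤ F s := hsS.2
      _ ≤ ν (Ioc 0 (τ k + 1/(n+1))) := measure_mono (Ioc_subset_Ioc_right hs.le)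
  -- the key block estimate
  set Δ : ℤ → ℝ≥0∞ := fun k => ∫⁻ x in Ioc (τ (k-1)) (τ k), η x with hΔdef
  have key : ∀ k : ℤ, (S k).Nonempty →
      (2:ℝ≥0∞) ^ ((k:ℝ) + 1) * (∫⁻ s in Ioi (τ k), w s ^ q) ^ (1/q)
        ≤ 4 * c⁻¹ * B * Δ k := by
    intro k hne
    have hne' : (S (k-1)).Nonempty := hne.mono (hSsub (by omega))
    have hτpos' : 0 < τ (k-1) := hτpos _ hne'
    have hτab : τ (k-1) ≤ τ k := hτmono (by omega) hne
    have hdisj0 : Disjoint (Ioc (0:ℝ) (τ (k-1))) (Ioc (τ (k-1)) (τ k)) :=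
      Ioc_disjoint_Ioc.mpr (le_trans (min_le_left _ _) (le_max_right _ _))
    have hsplit : ν (Ioc 0 (τ k)) = ν (Ioc 0 (τ (k-1))) + ν (Ioc (τ (k-1)) (τ k)) := by
      rw [← Ioc_union_Ioc_eq_Ioc hτpos'.le hτab, measure_union hdisj0 measurableSet_Ioc]
    have hblockmass : β (k-1) * (r - 1) ≤ ν (Ioc (τ (k-1)) (τ k)) := by
      have h1 : β k ≤ ν (Ioc 0 (τ (k-1))) + ν (Ioc (τ (k-1)) (τ k)) := hsplit ▸ hlow k hne
      have h3 : β k ≤ β (k-1) + ν (Ioc (τ (k-1)) (τ k)) :=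
        h1.trans (add_le_add_left (hup (k-1)) _)
      have h4 : β (k-1) + β (k-1) * (r-1) ≤ β (k-1) + ν (Ioc (τ (k-1)) (τ k)) := by
        refine le_trans (le_of_eq ?_) h3
        calc β (k-1) + β (k-1) * (r-1) = β (k-1) * (1 + (r-1)) := by ring
          _ = β (k-1) * r := by rw [add_comm (1:ℝ≥0∞), tsub_add_cancel_of_le hr1.le]
          _ = β ((k-1)+1) := (hβsucc (k-1)).symm
          _ = β k := by congr 1; omega
      exact (ENNReal.add_le_add_iff_left (hβt (k-1))).mp h4
    have hH : ν (Ioc (τ (k-1)) (τ k)) ≤ (mauxDp p h (τ k) * Δ k) ^ p := by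
      rw [hνap _ measurableSet_Ioc, ENNReal.mul_rpow_of_nonneg _ _ hp.le]
      exact maux_block hp hp1 hh hη hτpos'.le
    have hKey1 : (2:ℝ≥0∞) ^ ((k:ℝ) - 1) * c ≤ mauxDp p h (τ k) * Δ k := by
      have h5 : β (k-1) * (r-1) ≤ (mauxDp p h (τ k) * Δ k) ^ p := hblockmass.trans hH
      have h6 := ENNReal.rpow_le_rpow h5 (by positivity : (0:ℝ) ≤ 1/p)
      rw [← ENNReal.rpow_mul, mul_one_div_cancel hp0, ENNReal.rpow_one,
        ENNReal.mul_rpow_of_nonneg _ _ (by positivity : (0:ℝ) ≤ 1/p)] at h6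
      have h7 : (β (k-1)) ^ (1/p) = (2:ℝ≥0∞) ^ ((k:ℝ) - 1) := by
        rw [hβrpow (k-1)]; congr 1; push_cast; ring
      rw [h7] at h6
      exact h6
    have hKey2 : (∫⁻ s in Ioi (τ k), w s ^ q) ^ (1/q) * ((2:ℝ≥0∞) ^ ((k:ℝ) - 1) * c)
        ≤ B * Δ k := by
      calc (∫⁻ s in Ioi (τ k), w s ^ q) ^ (1/q) * ((2:ℝ≥0∞) ^ ((k:ℝ) - 1) * c)
          ≤ (∫⁻ s in Ioi (τ k), w s ^ q) ^ (1/q) * (mauxDp p h (τ k) * Δ k) :=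
            mul_le_mul_right hKey1 _
        _ = ((∫⁻ s in Ioi (τ k), w s ^ q) ^ (1/q) * mauxDp p h (τ k)) * Δ k := by ring
        _ ≤ B * Δ k := mul_le_mul_left (hB _ (hτpos k hne)) _
    have h8 : (2:ℝ≥0∞) ^ ((k:ℝ) + 1) = 4 * c⁻¹ * (c * (2:ℝ≥0∞) ^ ((k:ℝ) - 1)) := by
      have h9 : 4 * c⁻¹ * (c * (2:ℝ≥0∞) ^ ((k:ℝ) - 1))
          = (c⁻¹ * c) * (4 * (2:ℝ≥0∞) ^ ((k:ℝ) - 1)) := by ring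
      rw [h9, ENNReal.inv_mul_cancel hc0 hct, one_mul]
      have h10 : (4:ℝ≥0∞) = (2:ℝ≥0∞) ^ (2:ℝ) := by
        rw [show (2:ℝ) = ((2:ℕ):ℝ) by norm_num, ENNReal.rpow_natCast]; norm_num
      rw [h10, ← ENNReal.rpow_add _ _ (by simp : (2:ℝ≥0∞) ≠ 0) h2t]
      congr 1; ring
    calc (2:ℝ≥0∞) ^ ((k:ℝ) + 1) * (∫⁻ s in Ioi (τ k), w s ^ q) ^ (1/q)
        = 4 * c⁻¹ * ((∫⁻ s in Ioi (τ k), w s ^ q) ^ (1/q) * ((2:ℝ≥0∞) ^ ((k:ℝ) - 1) * c)) := by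
          rw [h8]; ring
      _ ≤ 4 * c⁻¹ * (B * Δ k) := mul_le_mul_right hKey2 _
      _ = 4 * c⁻¹ * B * Δ k := by ring
  -- decomposition of the integral
  set E : ℤ → Set ℝ := fun k => Ioi (0:ℝ) ∩ F ⁻¹' (Ico (β k) (β (k+1))) with hEdef
  have hEmeas : ∀ k, MeasurableSet (E k) := fun k =>
    measurableSet_Ioi.inter (hFmeas measurableSet_Ico)
  have hβz : ∀ m : ℤ, r ^ m = β m := by
    intro m
    rw [hrdef, hβdef, ← ENNReal.rpow_intCast ((2:ℝ≥0∞) ^ p) m, ← ENNReal.rpow_mul]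
    congr 1; push_cast; ring
  have hcov : Ioi (0:ℝ) ⊆ (F ⁻¹' {0}) ∪ ⋃ k : ℤ, E k := by
    intro t ht
    by_cases h0 : F t = 0
    · exact Or.inl (by simpa using h0)
    · obtain ⟨n, hn⟩ := ENNReal.exists_mem_Ico_zpow h0 (hFfin t) hr1 hrt
      refine Or.inr (mem_iUnion.mpr ⟨n, ht, ?_⟩)
      simp only [mem_preimage, mem_Ico]
      exact ⟨(hβz n) ▸ hn.1, (hβz (n+1)) ▸ hn.2⟩
  set Wf : ℝ → ℝ≥0∞ := fun t => ((F t) ^ (1/p) * w t) ^ q with hWfdef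
  have hZ0 : ∫⁻ t in F ⁻¹' {0}, Wf t = 0 := by
    have hm : MeasurableSet (F ⁻¹' {0}) := hFmeas (measurableSet_singleton 0)
    rw [setLIntegral_congr_fun_ae hm (ae_of_all _ (fun t (ht : F t = 0) => ?_)), lintegral_zero]
    rw [hWfdef]
    simp only [ht, ENNReal.zero_rpow_of_pos (by positivity : (0:ℝ) < 1/p), zero_mul,
      ENNReal.zero_rpow_of_pos hq0]
  have hterm : ∀ k : ℤ, ∫⁻ t in E k, Wf t
      ≤ (4 * c⁻¹ * B * (if (S k).Nonempty then Δ k else 0)) ^ q := by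
    intro k
    by_cases hne : (S k).Nonempty
    · rw [if_pos hne]
      have hsub2 : E k ⊆ Ici (τ k) := fun t ht => hτle k t ⟨ht.1, ht.2.1⟩
      calc ∫⁻ t in E k, Wf t ≤ ∫⁻ t in E k, ((2:ℝ≥0∞) ^ ((k:ℝ)+1) * w t) ^ q := by
            refine lintegral_mono_ae ((ae_restrict_iff' (hEmeas k)).mpr
              (ae_of_all _ fun t ht => ?_))
            rw [hWfdef]
            refine ENNReal.rpow_le_rpow (mul_le_mul_left ?_ _) hq0.le
            have h11 : F t ^ (1/p) ≤ (β (k+1)) ^ (1/p) :=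
              ENNReal.rpow_le_rpow ht.2.2.le (by positivity)
            refine h11.trans (le_of_eq ?_)
            rw [hβrpow (k+1)]; congr 1; push_cast; ring
        _ = ((2:ℝ≥0∞) ^ ((k:ℝ)+1)) ^ q * ∫⁻ t in E k, w t ^ q := by
            simp_rw [ENNReal.mul_rpow_of_nonneg _ _ hq0.le]
            exact lintegral_const_mul _ (hw.pow_const q)
        _ ≤ ((2:ℝ≥0∞) ^ ((k:ℝ)+1)) ^ q * ∫⁻ t in Ioi (τ k), w t ^ q := by
            refine mul_le_mul_right ?_ _
            have h12 : ∫⁻ t in E k, w t ^ q ≤ ∫⁻ t in Ici (τ k), w t ^ q :=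
              lintegral_mono_set hsub2
            rwa [← Measure.restrict_congr_set (Ioi_ae_eq_Ici (a := τ k))] at h12
        _ = ((2:ℝ≥0∞) ^ ((k:ℝ)+1) * (∫⁻ t in Ioi (τ k), w t ^ q) ^ (1/q)) ^ q := by
            rw [ENNReal.mul_rpow_of_nonneg _ _ hq0.le]
            congr 1
            rw [← ENNReal.rpow_mul, one_div_mul_cancel hq0.ne', ENNReal.rpow_one]
        _ ≤ (4 * c⁻¹ * B * Δ k) ^ q := ENNReal.rpow_le_rpow (key k hne) hq0.le
    · have hEempty : E k = ∅ := by
        ext t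
        simp only [mem_empty_iff_false, iff_false]
        intro ht
        exact hne ⟨t, ht.1, ht.2.1⟩
      rw [hEempty]
      simp
  have hΔsum : ∑' k : ℤ, (if (S k).Nonempty then Δ k else 0) ≤ G := by
    set νη : Measure ℝ := volume.withDensity η with hνηdef
    set blk : ℤ → Set ℝ := fun k => if (S k).Nonempty then Ioc (τ (k-1)) (τ k) else ∅
      with hblkdef
    have hblkmeas : ∀ k, MeasurableSet (blk k) := by
      intro k
      simp only [hblkdef]
      split_ifs
      · exact measurableSet_Ioc
      · exact MeasurableSet.empty
    have hδeq : ∀ k, (if (S k).Nonempty then Δ k else 0) = νη (blk k) := by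
      intro k
      simp only [hblkdef]
      by_cases hne : (S k).Nonempty
      · rw [if_pos hne, if_pos hne, hνηdef, withDensity_apply _ measurableSet_Ioc]
      · rw [if_neg hne, if_neg hne]
        simp
    have hdisjaux : ∀ {k l : ℤ}, k < l → Disjoint (blk k) (blk l) := by
      intro k l hkl
      simp only [hblkdef]
      by_cases h1 : (S k).Nonempty
      · by_cases h2 : (S l).Nonempty
        · rw [if_pos h1, if_pos h2]
          have h3 : τ k ≤ τ (l-1) := hτmono (by omega) (h2.mono (hSsub (by omega)))
          exact Ioc_disjoint_Ioc.mpr (le_trans (min_le_left _ _)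
            (le_trans h3 (le_max_right _ _)))
        · rw [if_neg h2]; exact disjoint_empty _
      · rw [if_neg h1]; exact empty_disjoint _
    have hdisj : Pairwise (Function.onFun Disjoint blk) := by
      intro k l hkl
      rcases lt_or_gt_of_ne hkl with hc | hc
      · exact hdisjaux hc
      · exact (hdisjaux hc).symm
    have hsub3 : ∀ k, blk k ⊆ Ioi (0:ℝ) := by
      intro k x hx
      simp only [hblkdef] at hx
      by_cases hne : (S k).Nonempty
      · rw [if_pos hne] at hx
        exact lt_trans (hτpos (k-1) (hne.mono (hSsub (by omega)))) hx.1
      · rw [if_neg hne] at hx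
        exact absurd hx (notMem_empty x)
    calc ∑' k : ℤ, (if (S k).Nonempty then Δ k else 0) = ∑' k, νη (blk k) := tsum_congr hδeq
      _ = νη (⋃ k, blk k) := (measure_iUnion hdisj hblkmeas).symm
      _ ≤ νη (Ioi 0) := measure_mono (iUnion_subset hsub3)
      _ = G := by rw [hνηdef, withDensity_apply _ measurableSet_Ioi]
  calc ∫⁻ t in Ioi (0:ℝ), ((∫⁻ x in Ioo 0 t, (h x * η x) ^ p) ^ (1/p) * w t) ^ q
      ≤ ∫⁻ t in Ioi (0:ℝ), Wf t := by
        refine lintegral_mono fun t => ?_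
        rw [hWfdef]
        refine ENNReal.rpow_le_rpow (mul_le_mul_left (ENNReal.rpow_le_rpow ?_
          (by positivity)) _) hq0.le
        rw [← hνap _ measurableSet_Ioo]
        exact measure_mono Ioo_subset_Ioc_self
    _ ≤ ∫⁻ t in (F ⁻¹' {0}) ∪ ⋃ k : ℤ, E k, Wf t := lintegral_mono_set hcov
    _ ≤ (∫⁻ t in F ⁻¹' {0}, Wf t) + ∫⁻ t in ⋃ k : ℤ, E k, Wf t := lintegral_union_le _ _ _
    _ ≤ 0 + ∑' k : ℤ, ∫⁻ t in E k, Wf t :=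
        add_le_add (le_of_eq hZ0) (lintegral_iUnion_le _ _)
    _ = ∑' k : ℤ, ∫⁻ t in E k, Wf t := zero_add _
    _ ≤ ∑' k : ℤ, (4 * c⁻¹ * B * (if (S k).Nonempty then Δ k else 0)) ^ q :=
        ENNReal.tsum_le_tsum hterm
    _ = (4 * c⁻¹ * B) ^ q * ∑' k : ℤ, (if (S k).Nonempty then Δ k else 0) ^ q := by
        simp_rw [ENNReal.mul_rpow_of_nonneg _ _ hq0.le]
        rw [ENNReal.tsum_mul_left]
    _ ≤ (4 * c⁻¹ * B) ^ q * (∑' k : ℤ, (if (S k).Nonempty then Δ k else 0)) ^ q :=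
        mul_le_mul_right (maux_tsum_rpow hq1 _) _
    _ ≤ (4 * c⁻¹ * B) ^ q * G ^ q :=
        mul_le_mul_right (ENNReal.rpow_le_rpow hΔsum hq0.le) _
    _ = (4 * c⁻¹ * B * G) ^ q := by
        rw [← ENNReal.mul_rpow_of_nonneg _ _ hq0.le]
    _ = (4 * (r - 1) ^ (-(1/p)) * B * G) ^ q := by
        rw [ENNReal.rpow_neg, ← hcdef]

end MultAux

/-- Multipliers from `Cop₁(u)` to `Ces_{p,q}(w,v)` for `0 < p ≤ 1 ≤ q < ∞`, `p ≠ q`: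
`‖f‖_{M(Cop₁(u), Ces_{p,q}(w,v))} ≈ sup_{t>0} (∫_t^∞ w^q)^{1/q} ‖f·ω₂‖_{p',(0,t)}`,
where `ω₂(x) = (∫_0^x u)⁻¹ v(x)`, with constants depending only on `p` and `q`. -/
theorem multiplier_r_eq_one_q_ge_one (p q : ℝ) (hp : 0 < p) (hp1 : p ≤ 1)
    (hq1 : 1 ≤ q) (hpq : p ≠ q) :
    ∃ c C : ℝ≥0∞, 0 < c ∧ c < ∞ ∧ 0 < C ∧ C < ∞ ∧
      ∀ u v w : ℝ → ℝ≥0∞, IsWeightOn v → MemOmegaDual 1 u →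
        MemOmega (ENNReal.ofReal q) w →
        ∀ f : ℝ → ℝ≥0∞, Measurable f →
          let ω₂ : ℝ → ℝ≥0∞ := fun x => (∫⁻ t in Ioo (0:ℝ) x, u t)⁻¹ * v x
          let lhs := multNorm (copsonNorm 1 1 u (fun _ => 1))
            (cesaroNorm (ENNReal.ofReal p) (ENNReal.ofReal q) w v) f
          let rhs := ⨆ t ∈ Ioi (0:ℝ),
            (∫⁻ s in Ioi t, w s ^ q) ^ (1 / q) *
              wNorm (dualExp p) (fun x => f x * ω₂ x) (Ioo 0 t)
          c * rhs ≤ lhs ∧ lhs ≤ C * rhs := by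
  classical
  have hq0 : (0:ℝ) < q := by linarith
  have hp0 : p ≠ 0 := hp.ne'
  have hr1 : (1:ℝ≥0∞) < 2 ^ p := by
    have h0 := ENNReal.rpow_lt_rpow_of_exponent_lt (x := 2) one_lt_two ENNReal.ofNat_ne_top hp
    simpa using h0
  have hrm1pos : (0:ℝ≥0∞) < 2 ^ p - 1 := by rw [tsub_pos_iff_lt]; exact hr1
  have hrm1t : (2:ℝ≥0∞) ^ p - 1 ≠ ⊤ :=
    ne_top_of_le_ne_top (ENNReal.rpow_lt_top_of_nonneg hp.le ENNReal.ofNat_ne_top).ne tsub_le_self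
  have hCpos : (0:ℝ≥0∞) < 4 * ((2:ℝ≥0∞) ^ p - 1) ^ (-(1/p)) :=
    ENNReal.mul_pos (by norm_num) (ENNReal.rpow_pos hrm1pos hrm1t).ne'
  have hCfin : 4 * ((2:ℝ≥0∞) ^ p - 1) ^ (-(1/p)) < ∞ := by
    refine ENNReal.mul_lt_top (by norm_num) ?_
    rw [lt_top_iff_ne_top]
    simp [ENNReal.rpow_eq_top_iff, hrm1pos.ne', hrm1t]
  refine ⟨1, 4 * ((2:ℝ≥0∞) ^ p - 1) ^ (-(1/p)), one_pos, ENNReal.one_lt_top, hCpos, hCfin, ?_⟩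
  intro u v w hv hu hw f hf
  obtain ⟨humeas, huprop⟩ := hu
  obtain ⟨hwmeas, hwprop⟩ := hw
  obtain ⟨hvmeas, hvprop⟩ := hv
  intro ω₂ lhs rhs
  -- basic objects
  set U : ℝ → ℝ≥0∞ := fun x => ∫⁻ s in Ioo (0:ℝ) x, u s with hUdef
  have hUmono : Monotone U := fun a b hab =>
    lintegral_mono_set (Ioo_subset_Ioo le_rfl hab)
  have hUmeas : Measurable U := hUmono.measurable
  have hU0 : ∀ x : ℝ, 0 < x → U x ≠ 0 := by
    intro x hx
    have h1 := (huprop x hx).1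
    rw [maux_wNorm_one] at h1
    exact h1.ne'
  have hUt : ∀ x : ℝ, 0 < x → U x ≠ ∞ := by
    intro x hx
    have h1 := (huprop x hx).2
    rw [maux_wNorm_one] at h1
    exact h1.ne
  have hω₂U : ω₂ = fun x => (U x)⁻¹ * v x := rfl
  have hωmeas : Measurable ω₂ := by
    rw [hω₂U]; exact hUmeas.inv.mul hvmeas
  set h : ℝ → ℝ≥0∞ := fun x => f x * ω₂ x with hhdef
  have hhmeas : Measurable h := hf.mul hωmeas
  have hhx : ∀ x : ℝ, h x = f x * ((U x)⁻¹ * v x) := fun x => rfl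
  -- positivity of the tail integrals of w^q
  have hWqpos : ∀ t : ℝ, 0 < t → 0 < ∫⁻ s in Ioi t, w s ^ q := by
    intro t ht
    have h1 := (hwprop t ht).1
    rw [maux_wNorm_ofReal hq0] at h1
    by_contra hcon
    rw [not_lt, le_zero_iff] at hcon
    rw [hcon, ENNReal.zero_rpow_of_pos (by positivity)] at h1
    exact lt_irrefl _ h1
  have hWqne : ∀ t : ℝ, 0 < t → ((∫⁻ s in Ioi t, w s ^ q) ^ (1/q)) ≠ 0 :=
    fun t ht => (maux_rpow_pos (hWqpos t ht) (by positivity)).ne'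
  -- rewriting of rhs
  have hrhs : rhs = ⨆ t ∈ Ioi (0:ℝ), (∫⁻ s in Ioi t, w s ^ q) ^ (1/q) * mauxDp p h t := by
    show (⨆ t ∈ Ioi (0:ℝ), (∫⁻ s in Ioi t, w s ^ q) ^ (1 / q) *
      wNorm (dualExp p) (fun x => f x * ω₂ x) (Ioo 0 t)) = _
    refine iSup_congr fun t => iSup_congr fun _ => ?_
    rw [maux_Dp_eq hp hp1]
  -- rewriting of the Copson norm
  have hX : ∀ g : ℝ → ℝ≥0∞, Measurable g →
      copsonNorm 1 1 u (fun _ => 1) g = ∫⁻ x in Ioi (0:ℝ), g x * U x := by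
    intro g hg
    rw [copsonNorm, maux_wNorm_one]
    have e : ∀ t : ℝ, wNorm 1 (fun x => g x * 1) (Ioi t) * u t
        = (∫⁻ x in Ioi t, g x) * u t := by
      intro t
      rw [maux_wNorm_one]
      simp only [mul_one]
    rw [lintegral_congr e]
    exact maux_fubini humeas hg
  -- rewriting of the Cesàro norm
  have hYeq : ∀ g : ℝ → ℝ≥0∞, cesaroNorm (ENNReal.ofReal p) (ENNReal.ofReal q) w v
      (fun x => f x * g x)
      = (∫⁻ s in Ioi (0:ℝ),
          ((∫⁻ x in Ioo 0 s, (f x * g x * v x) ^ p) ^ (1/p) * w s) ^ q) ^ (1/q) := by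
    intro g
    rw [cesaroNorm, maux_wNorm_ofReal hq0]
    congr 1
    refine lintegral_congr fun s => ?_
    rw [maux_wNorm_ofReal hp]
  -- pointwise identity between f*g*v and h*(g*U)
  have hfgv : ∀ (g : ℝ → ℝ≥0∞) (x : ℝ), 0 < x → f x * g x * v x = h x * (g x * U x) := by
    intro g x hx
    have hinv : (U x)⁻¹ * U x = 1 := ENNReal.inv_mul_cancel (hU0 x hx) (hUt x hx)
    rw [hhx x]
    calc f x * g x * v x = f x * g x * v x * 1 := (mul_one _).symm
      _ = f x * g x * v x * ((U x)⁻¹ * U x) := by rw [hinv]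
      _ = f x * ((U x)⁻¹ * v x) * (g x * U x) := by ring
  constructor
  · -- LOWER BOUND : rhs ≤ lhs
    rw [one_mul, hrhs]
    refine iSup₂_le fun t ht => ?_
    rw [mem_Ioi] at ht
    -- reduce to elements of the supremum defining lhs
    have hlhs_ge : ∀ g : ℝ → ℝ≥0∞, Measurable g →
        (¬ (∀ᵐ x ∂(volume.restrict (Ioi (0:ℝ))), g x = 0)) →
        cesaroNorm (ENNReal.ofReal p) (ENNReal.ofReal q) w v (fun x => f x * g x) /
          copsonNorm 1 1 u (fun _ => 1) g ≤ lhs := by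
      intro g hg hne
      exact le_iSup₂ (f := fun g _ =>
        cesaroNorm (ENNReal.ofReal p) (ENNReal.ofReal q) w v (fun x => f x * g x) /
          copsonNorm 1 1 u (fun _ => 1) g) g ⟨hg, hne⟩
    rcases eq_or_lt_of_le hp1 with hpeq | hplt
    · -- CASE p = 1
      subst hpeq
      rw [mauxDp, if_pos rfl]
      set D := essSup h (volume.restrict (Ioo 0 t)) with hDdef
      have hstep : ∀ rr : ℝ≥0, (rr : ℝ≥0∞) < D →
          (∫⁻ s in Ioi t, w s ^ q) ^ (1/q) * rr ≤ lhs := by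
        intro rr hrr
        set A : Set ℝ := Ioo 0 t ∩ {x | (rr:ℝ≥0∞) < h x} with hAdef
        have hAmeas : MeasurableSet A :=
          measurableSet_Ioo.inter (hhmeas measurableSet_Ioi)
        have hApos : 0 < volume A := by
          by_contra hcon
          rw [not_lt, le_zero_iff] at hcon
          have hae : ∀ᵐ x ∂(volume.restrict (Ioo 0 t)), h x ≤ rr := by
            rw [ae_restrict_iff' measurableSet_Ioo]
            rw [ae_iff]
            refine measure_mono_null ?_ hcon
            intro x hx
            simp only [mem_setOf_eq, not_forall, not_le] at hx
            exact ⟨hx.1, hx.2⟩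
          have hcon2 : D ≤ rr := essSup_le_of_ae_le _ hae
          exact absurd hrr (not_lt.mpr hcon2)
        have hAsub : A ⊆ Ioo 0 t := inter_subset_left
        have hAsub' : A ⊆ Ioi 0 := fun x hx => hx.1.1
        set g : ℝ → ℝ≥0∞ := A.indicator (fun _ => (1:ℝ≥0∞)) with hgdef
        have hgmeas : Measurable g := measurable_const.indicator hAmeas
        have hgU : ∀ x, g x * U x = A.indicator U x := by
          intro x
          by_cases hx : x ∈ A
          · rw [hgdef, indicator_of_mem hx, indicator_of_mem hx, one_mul]
          · rw [hgdef, indicator_of_notMem hx, indicator_of_notMem hx, zero_mul]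
        have hXA : ∫⁻ x in Ioi (0:ℝ), g x * U x = ∫⁻ x in A, U x := by
          rw [lintegral_congr hgU, lintegral_indicator hAmeas,
            Measure.restrict_restrict hAmeas, inter_eq_self_of_subset_left hAsub']
        have hXA0 : (∫⁻ x in A, U x) ≠ 0 := by
          intro hcon
          rw [lintegral_eq_zero_iff hUmeas] at hcon
          have h2 : volume A = 0 := by
            have h3 := hcon
            rw [EventuallyEq, ae_restrict_iff' hAmeas, ae_iff] at h3
            refine measure_mono_null (fun x hx => ?_) h3
            simp only [mem_setOf_eq, not_forall]
            exact ⟨hx, hU0 x (hAsub' hx)⟩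
          exact absurd h2 hApos.ne'
        have hXAt : (∫⁻ x in A, U x) ≠ ∞ := by
          have hb : ∫⁻ x in A, U x ≤ U t * volume A := by
            calc ∫⁻ x in A, U x ≤ ∫⁻ _ in A, U t := by
                  refine lintegral_mono_ae ((ae_restrict_iff' hAmeas).mpr
                    (ae_of_all _ fun x hx => hUmono (hAsub hx).2.le))
              _ = U t * volume A := setLIntegral_const A (U t)
          refine ne_top_of_le_ne_top ?_ hb
          refine (ENNReal.mul_lt_top (lt_top_iff_ne_top.mpr (hUt t ht)) ?_).ne
          calc volume A ≤ volume (Ioo 0 t) := measure_mono hAsub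
            _ = ENNReal.ofReal (t - 0) := Real.volume_Ioo
            _ < ∞ := ENNReal.ofReal_lt_top
        have hgne : ¬ (∀ᵐ x ∂(volume.restrict (Ioi (0:ℝ))), g x = 0) := by
          intro hcon
          apply hXA0
          rw [← hXA]
          calc ∫⁻ x in Ioi (0:ℝ), g x * U x
              = ∫⁻ _ in Ioi (0:ℝ), 0 := lintegral_congr_ae (hcon.mono fun x hx => by
                  simp [hx])
            _ = 0 := lintegral_zero
        -- lower bound for the Cesàro norm
        have hKlow : ∀ s : ℝ, t < s →
            (rr : ℝ≥0∞) * ∫⁻ x in A, U x ≤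
              (∫⁻ x in Ioo 0 s, (f x * g x * v x) ^ (1:ℝ)) ^ (1/(1:ℝ)) := by
          intro s hs
          simp only [ENNReal.rpow_one, one_div_one]
          have hsub2 : A ⊆ Ioo 0 s := fun x hx =>
            ⟨(hAsub hx).1, lt_trans (hAsub hx).2 hs⟩
          calc (rr : ℝ≥0∞) * ∫⁻ x in A, U x = ∫⁻ x in A, (rr : ℝ≥0∞) * U x :=
              (lintegral_const_mul _ hUmeas).symm
            _ ≤ ∫⁻ x in A, f x * g x * v x := by
                refine lintegral_mono_ae ((ae_restrict_iff' hAmeas).mpr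
                  (ae_of_all _ fun x hx => ?_))
                have hx0 : 0 < x := hAsub' hx
                have hg1 : g x = 1 := by rw [hgdef, indicator_of_mem hx]
                rw [hfgv g x hx0, hg1, one_mul]
                exact mul_le_mul_left (le_of_lt hx.2) _
            _ ≤ ∫⁻ x in Ioo 0 s, f x * g x * v x := lintegral_mono_set hsub2
        have hY : (∫⁻ s in Ioi t, w s ^ q) ^ (1/q) * ((rr : ℝ≥0∞) * ∫⁻ x in A, U x)
            ≤ cesaroNorm (ENNReal.ofReal 1) (ENNReal.ofReal q) w v (fun x => f x * g x) := by
          rw [hYeq g]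
          exact maux_tail hq0 hwmeas ht _ hKlow
        have hXeq : copsonNorm 1 1 u (fun _ => 1) g = ∫⁻ x in A, U x :=
          (hX g hgmeas).trans hXA
        refine le_trans ?_ (hlhs_ge g hgmeas hgne)
        rw [hXeq, ENNReal.le_div_iff_mul_le (Or.inl hXA0) (Or.inl hXAt)]
        calc (∫⁻ s in Ioi t, w s ^ q) ^ (1/q) * rr * ∫⁻ x in A, U x
            = (∫⁻ s in Ioi t, w s ^ q) ^ (1/q) * ((rr : ℝ≥0∞) * ∫⁻ x in A, U x) :=
              mul_assoc _ _ _
          _ ≤ _ := hY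
      -- pass to the supremum over rr < D
      have hDsup : D = ⨆ (rr : ℝ≥0) (_ : (rr:ℝ≥0∞) < D), (rr : ℝ≥0∞) := by
        refine le_antisymm (le_of_forall_nnreal_lt fun rr hrr => ?_)
          (iSup₂_le fun rr hrr => hrr.le)
        exact le_iSup₂ (f := fun (rr : ℝ≥0) (_ : (rr:ℝ≥0∞) < D) => (rr:ℝ≥0∞)) rr hrr
      calc (∫⁻ s in Ioi t, w s ^ q) ^ (1/q) * D
          = ⨆ (rr : ℝ≥0) (_ : (rr:ℝ≥0∞) < D),
              (∫⁻ s in Ioi t, w s ^ q) ^ (1/q) * rr := by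
            conv_lhs => rw [hDsup]
            rw [ENNReal.mul_iSup]
            refine iSup_congr fun rr => ?_
            rw [ENNReal.mul_iSup]
        _ ≤ lhs := iSup₂_le hstep
    · -- CASE p < 1
      rw [mauxDp, if_neg hplt.ne]
      have h1mp : (0:ℝ) < 1 - p := by linarith
      set p' : ℝ := p / (1-p) with hp'def
      have hp'pos : 0 < p' := by positivity
      -- truncations
      have hmain : ∀ n : ℕ, (∫⁻ s in Ioi t, w s ^ q) ^ (1/q) *
          (∫⁻ x in Ioo 0 t, (min (h x) n) ^ p') ^ ((1-p)/p) ≤ lhs := by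
        intro n
        set hn : ℝ → ℝ≥0∞ := fun x => min (h x) n with hhndef
        have hnmeas : Measurable hn := hhmeas.min measurable_const
        have hnfin : ∀ x, hn x ≠ ∞ := fun x =>
          ne_top_of_le_ne_top (ENNReal.natCast_ne_top n) (min_le_right _ _)
        set Dn : ℝ≥0∞ := ∫⁻ x in Ioo 0 t, hn x ^ p' with hDndef
        by_cases hDn0 : Dn = 0
        · rw [hDn0, ENNReal.zero_rpow_of_pos (by positivity), mul_zero]
          exact zero_le
        have hDnt : Dn ≠ ∞ := by
          have hb : Dn ≤ (n:ℝ≥0∞) ^ p' * volume (Ioo (0:ℝ) t) := by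
            calc Dn ≤ ∫⁻ _ in Ioo (0:ℝ) t, (n:ℝ≥0∞) ^ p' :=
                lintegral_mono fun x =>
                  ENNReal.rpow_le_rpow (min_le_right _ _) hp'pos.le
              _ = (n:ℝ≥0∞) ^ p' * volume (Ioo (0:ℝ) t) := setLIntegral_const _ _
          refine ne_top_of_le_ne_top ?_ hb
          refine (ENNReal.mul_lt_top ?_ ?_).ne
          · exact ENNReal.rpow_lt_top_of_nonneg hp'pos.le (ENNReal.natCast_ne_top n)
          · rw [Real.volume_Ioo]; exact ENNReal.ofReal_lt_top
        set g : ℝ → ℝ≥0∞ := fun x => if x ∈ Ioo (0:ℝ) t then hn x ^ p' * (U x)⁻¹ else 0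
          with hgdef
        have hgmeas : Measurable g :=
          Measurable.ite measurableSet_Ioo ((hnmeas.pow_const p').mul hUmeas.inv)
            measurable_const
        have hgU : ∀ x, g x * U x = (Ioo (0:ℝ) t).indicator (fun x => hn x ^ p') x := by
          intro x
          by_cases hx : x ∈ Ioo (0:ℝ) t
          · rw [hgdef]
            simp only [if_pos hx, indicator_of_mem hx]
            rw [mul_assoc, ENNReal.inv_mul_cancel (hU0 x hx.1) (hUt x hx.1), mul_one]
          · rw [hgdef]
            simp only [if_neg hx, indicator_of_notMem hx, zero_mul]
        have hXg : ∫⁻ x in Ioi (0:ℝ), g x * U x = Dn := by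
          rw [lintegral_congr hgU, lintegral_indicator measurableSet_Ioo,
            Measure.restrict_restrict measurableSet_Ioo,
            inter_eq_self_of_subset_left Ioo_subset_Ioi_self]
        have hgne : ¬ (∀ᵐ x ∂(volume.restrict (Ioi (0:ℝ))), g x = 0) := by
          intro hcon
          apply hDn0
          rw [← hXg]
          calc ∫⁻ x in Ioi (0:ℝ), g x * U x
              = ∫⁻ _ in Ioi (0:ℝ), 0 := lintegral_congr_ae (hcon.mono fun x hx => by
                  simp [hx])
            _ = 0 := lintegral_zero
        -- pointwise lower bound inside (0,t)
        have hptwise : ∀ x, x ∈ Ioo (0:ℝ) t → hn x ^ p' ≤ (f x * g x * v x) ^ p := by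
          intro x hx
          have he1 : f x * g x * v x = h x * (hn x ^ p' * (U x)⁻¹ * U x) := by
            rw [hfgv g x hx.1, hgdef]
            simp only [if_pos hx]
          have he2 : hn x ^ p' * (U x)⁻¹ * U x = hn x ^ p' := by
            rw [mul_assoc, ENNReal.inv_mul_cancel (hU0 x hx.1) (hUt x hx.1), mul_one]
          rw [he1, he2]
          have h1mp' : (1:ℝ) - p ≠ 0 := by linarith
          have he3 : hn x ^ p' ≤ (hn x * hn x ^ p') ^ p := by
            by_cases h0 : hn x = 0
            · rw [h0, ENNReal.zero_rpow_of_pos hp'pos, mul_zero,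
                ENNReal.zero_rpow_of_pos hp]
            · have e4 : hn x * hn x ^ p' = hn x ^ (1 + p') := by
                rw [ENNReal.rpow_add _ _ h0 (hnfin x), ENNReal.rpow_one]
              have e5 : (hn x ^ (1+p')) ^ p = hn x ^ p' := by
                rw [← ENNReal.rpow_mul]
                congr 1
                rw [hp'def]
                field_simp
                ring
              rw [e4, e5]
          refine he3.trans (ENNReal.rpow_le_rpow ?_ hp.le)
          exact mul_le_mul_left (min_le_left _ _) _
        have hKlow : ∀ s : ℝ, t < s →
            Dn ^ (1/p) ≤ (∫⁻ x in Ioo 0 s, (f x * g x * v x) ^ p) ^ (1/p) := by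
          intro s hs
          refine ENNReal.rpow_le_rpow ?_ (by positivity)
          calc Dn ≤ ∫⁻ x in Ioo 0 t, (f x * g x * v x) ^ p := by
                refine lintegral_mono_ae ((ae_restrict_iff' measurableSet_Ioo).mpr
                  (ae_of_all _ fun x hx => hptwise x hx))
            _ ≤ ∫⁻ x in Ioo 0 s, (f x * g x * v x) ^ p :=
                lintegral_mono_set (Ioo_subset_Ioo le_rfl hs.le)
        have hY : (∫⁻ s in Ioi t, w s ^ q) ^ (1/q) * Dn ^ (1/p)
            ≤ cesaroNorm (ENNReal.ofReal p) (ENNReal.ofReal q) w v (fun x => f x * g x) := by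
          rw [hYeq g]
          exact maux_tail hq0 hwmeas ht _ hKlow
        have hXeq : copsonNorm 1 1 u (fun _ => 1) g = Dn := (hX g hgmeas).trans hXg
        refine le_trans ?_ (hlhs_ge g hgmeas hgne)
        rw [hXeq, ENNReal.le_div_iff_mul_le (Or.inl hDn0) (Or.inl hDnt)]
        calc (∫⁻ s in Ioi t, w s ^ q) ^ (1/q) * Dn ^ ((1-p)/p) * Dn
            = (∫⁻ s in Ioi t, w s ^ q) ^ (1/q) * Dn ^ (1/p) := by
              rw [mul_assoc]
              congr 1
              nth_rewrite 2 [← ENNReal.rpow_one Dn]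
              rw [← ENNReal.rpow_add _ _ hDn0 hDnt]
              congr 1
              field_simp
              ring
          _ ≤ _ := hY
      -- monotone convergence in n
      have hsup1 : ∀ x : ℝ, (⨆ n : ℕ, (min (h x) n) ^ p') = h x ^ p' := by
        intro x
        refine le_antisymm (iSup_le fun n =>
          ENNReal.rpow_le_rpow (min_le_left _ _) hp'pos.le) ?_
        rcases eq_or_ne (h x) ∞ with htop | hfin
        · refine le_of_forall_nnreal_lt fun rr hrr => ?_
          have hrr' : ((rr:ℝ≥0∞) ^ (1/p')) ≠ ∞ := by
            rw [Ne, ENNReal.rpow_eq_top_iff]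
            rintro (⟨_, hneg⟩ | ⟨htop, _⟩)
            · exact absurd hneg (not_lt.mpr (by positivity))
            · exact ENNReal.coe_ne_top htop
          obtain ⟨n, hn⟩ := ENNReal.exists_nat_gt hrr'
          refine le_trans ?_ (le_iSup (fun n : ℕ => (min (h x) (n:ℝ≥0∞)) ^ p') n)
          have h2 : (rr:ℝ≥0∞) = ((rr:ℝ≥0∞) ^ (1/p')) ^ p' := by
            rw [← ENNReal.rpow_mul, one_div_mul_cancel hp'pos.ne', ENNReal.rpow_one]
          rw [h2]
          refine ENNReal.rpow_le_rpow ?_ hp'pos.le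
          rw [htop]
          simp only [min_eq_right (le_top : (n:ℝ≥0∞) ≤ ⊤)]
          exact hn.le
        · obtain ⟨n, hn⟩ := ENNReal.exists_nat_gt hfin
          refine le_trans (le_of_eq ?_) (le_iSup (fun n : ℕ => (min (h x) (n:ℝ≥0∞)) ^ p') n)
          rw [min_eq_left hn.le]
      have hsup2 : (⨆ n : ℕ, ∫⁻ x in Ioo 0 t, (min (h x) n) ^ p')
          = ∫⁻ x in Ioo 0 t, h x ^ p' := by
        rw [← lintegral_iSup (fun n => (hhmeas.min measurable_const).pow_const p')
          (fun n m hnm x => ENNReal.rpow_le_rpow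
            (min_le_min le_rfl (by exact_mod_cast Nat.cast_le.mpr hnm)) hp'pos.le)]
        exact lintegral_congr hsup1
      have hsup3 : (∫⁻ x in Ioo 0 t, h x ^ p') ^ ((1-p)/p)
          = ⨆ n : ℕ, (∫⁻ x in Ioo 0 t, (min (h x) n) ^ p') ^ ((1-p)/p) := by
        set e : ℝ := (1-p)/p with hedef
        have hepos : 0 < e := by positivity
        refine le_antisymm ?_ (iSup_le fun n => ENNReal.rpow_le_rpow
          (le_trans (le_iSup (fun n : ℕ => ∫⁻ x in Ioo 0 t, (min (h x) (n:ℝ≥0∞)) ^ p') n)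
            hsup2.le) hepos.le)
        set y : ℝ≥0∞ := ⨆ n : ℕ, (∫⁻ x in Ioo 0 t, (min (h x) n) ^ p') ^ e with hydef
        have h5 : ∀ n : ℕ, (∫⁻ x in Ioo 0 t, (min (h x) n) ^ p') ≤ y ^ (1/e) := by
          intro n
          have h6 : ((∫⁻ x in Ioo 0 t, (min (h x) n) ^ p') ^ e) ^ (1/e)
              = ∫⁻ x in Ioo 0 t, (min (h x) n) ^ p' := by
            rw [← ENNReal.rpow_mul, mul_one_div_cancel hepos.ne', ENNReal.rpow_one]
          rw [← h6]
          exact ENNReal.rpow_le_rpow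
            (le_iSup (fun n : ℕ => (∫⁻ x in Ioo 0 t, (min (h x) (n:ℝ≥0∞)) ^ p') ^ e) n)
            (by positivity)
        have h7 : ∫⁻ x in Ioo 0 t, h x ^ p' ≤ y ^ (1/e) := by
          rw [← hsup2]
          exact iSup_le h5
        have h8 := ENNReal.rpow_le_rpow h7 hepos.le
        rwa [← ENNReal.rpow_mul, one_div_mul_cancel hepos.ne', ENNReal.rpow_one] at h8
      rw [hsup3, ENNReal.mul_iSup]
      exact iSup_le hmain
  · -- UPPER BOUND : lhs ≤ C * rhs
    have hBub : ∀ t : ℝ, 0 < t →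
        (∫⁻ s in Ioi t, w s ^ q) ^ (1/q) * mauxDp p h t ≤ rhs := by
      intro t ht
      rw [hrhs]
      exact le_iSup₂ (f := fun t (_ : t ∈ Ioi (0:ℝ)) =>
        (∫⁻ s in Ioi t, w s ^ q) ^ (1/q) * mauxDp p h t) t ht
    refine iSup₂_le fun g hg => ?_
    obtain ⟨hgmeas, hgne⟩ := hg
    refine ENNReal.div_le_of_le_mul ?_
    set η : ℝ → ℝ≥0∞ := fun x => g x * U x with hηdef
    have hηmeas : Measurable η := hgmeas.mul hUmeas
    have hXeq : copsonNorm 1 1 u (fun _ => 1) g = ∫⁻ x in Ioi (0:ℝ), η x := hX g hgmeas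
    have hYeq2 : cesaroNorm (ENNReal.ofReal p) (ENNReal.ofReal q) w v (fun x => f x * g x)
        = (∫⁻ s in Ioi (0:ℝ),
            ((∫⁻ x in Ioo 0 s, (h x * η x) ^ p) ^ (1/p) * w s) ^ q) ^ (1/q) := by
      rw [hYeq g]
      have einner : ∀ s : ℝ, (∫⁻ x in Ioo 0 s, (f x * g x * v x) ^ p)
          = ∫⁻ x in Ioo 0 s, (h x * η x) ^ p := by
        intro s
        refine setLIntegral_congr_fun_ae measurableSet_Ioo (ae_of_all _ fun x hx => ?_)
        simp only [hηdef]
        rw [hfgv g x hx.1]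
      congr 1
      refine lintegral_congr fun s => ?_
      rw [einner s]
    rw [hYeq2, hXeq]
    -- degenerate case : the Cesàro side vanishes
    by_cases hhz : ∀ s : ℝ, ∫⁻ x in Ioo 0 s, (h x * η x) ^ p = 0
    · have hz : (∫⁻ s in Ioi (0:ℝ),
          ((∫⁻ x in Ioo 0 s, (h x * η x) ^ p) ^ (1/p) * w s) ^ q) ^ (1/q) = 0 := by
        have e : ∀ s : ℝ, ((∫⁻ x in Ioo 0 s, (h x * η x) ^ p) ^ (1/p) * w s) ^ q = 0 := by
          intro s
          rw [hhz s, ENNReal.zero_rpow_of_pos (by positivity), zero_mul,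
            ENNReal.zero_rpow_of_pos hq0]
        rw [lintegral_congr e, lintegral_zero, ENNReal.zero_rpow_of_pos (by positivity)]
      rw [hz]
      exact zero_le
    push_neg at hhz
    obtain ⟨s₀, hs₀⟩ := hhz
    -- in the non-degenerate case, rhs > 0 and the η-integral is positive
    have hrhs0 : rhs ≠ 0 := by
      intro hcon
      apply hs₀
      have hs₀pos : (0:ℝ) < s₀ := by
        by_contra hc
        push_neg at hc
        apply hs₀
        rw [Ioo_eq_empty (not_lt.mpr hc)]
        simp
      have hD0 : ∀ t : ℝ, 0 < t → mauxDp p h t = 0 := by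
        intro t ht
        have h1 := hBub t ht
        rw [hcon, le_zero_iff, mul_eq_zero] at h1
        exact h1.resolve_left (hWqne t ht)
      -- h vanishes a.e. on (0,s₀)
      have hh0 : ∀ᵐ x ∂(volume.restrict (Ioo (0:ℝ) s₀)), h x = 0 := by
        have hD := hD0 s₀ hs₀pos
        rcases eq_or_lt_of_le hp1 with hpeq | hplt
        · subst hpeq
          rw [mauxDp, if_pos rfl] at hD
          have := ENNReal.ae_le_essSup (μ := volume.restrict (Ioo (0:ℝ) s₀)) h
          rw [hD] at this
          exact this.mono fun x hx => le_antisymm hx (zero_le)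
        · rw [mauxDp, if_neg hplt.ne] at hD
          have h2 : ∫⁻ x in Ioo (0:ℝ) s₀, h x ^ (p/(1-p)) = 0 := by
            by_contra hc
            rw [ENNReal.rpow_eq_zero_iff] at hD
            rcases hD with ⟨hD1, _⟩ | ⟨hD1, hD2⟩
            · exact hc hD1
            · have : (0:ℝ) < (1-p)/p := by
                have : (0:ℝ) < 1 - p := by linarith
                positivity
              linarith
          rw [lintegral_eq_zero_iff (hhmeas.pow_const _)] at h2
          refine h2.mono fun x hx => ?_
          simp only [Pi.zero_apply] at hx
          rw [ENNReal.rpow_eq_zero_iff] at hx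
          rcases hx with ⟨hx1, _⟩ | ⟨_, hx2⟩
          · exact hx1
          · have h1mp : (0:ℝ) < 1 - p := by linarith
            have : (0:ℝ) < p/(1-p) := by positivity
            linarith
      calc ∫⁻ x in Ioo 0 s₀, (h x * η x) ^ p
          = ∫⁻ _ in Ioo (0:ℝ) s₀, 0 := lintegral_congr_ae (hh0.mono fun x hx => by
              simp [hx, ENNReal.zero_rpow_of_pos hp])
        _ = 0 := lintegral_zero
    have hG0 : (∫⁻ x in Ioi (0:ℝ), η x) ≠ 0 := by
      intro hcon
      apply hs₀
      have hη0 : ∀ᵐ x ∂(volume.restrict (Ioi (0:ℝ))), η x = 0 := by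
        rwa [lintegral_eq_zero_iff hηmeas] at hcon
      have hη0' : ∀ᵐ x ∂(volume.restrict (Ioo (0:ℝ) s₀)), η x = 0 :=
        ae_restrict_of_ae_restrict_of_subset (fun x hx => hx.1) hη0
      calc ∫⁻ x in Ioo 0 s₀, (h x * η x) ^ p
          = ∫⁻ _ in Ioo (0:ℝ) s₀, 0 := lintegral_congr_ae (hη0'.mono fun x hx => by
              simp [hx, ENNReal.zero_rpow_of_pos hp])
        _ = 0 := lintegral_zero
    by_cases hBt : rhs = ∞
    · refine le_top.trans (le_of_eq ?_)
      rw [hBt, ENNReal.mul_top hCpos.ne', ENNReal.top_mul hG0]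
    by_cases hGt : (∫⁻ x in Ioi (0:ℝ), η x) = ∞
    · refine le_top.trans (le_of_eq ?_)
      rw [hGt, ENNReal.mul_top (ENNReal.mul_pos hCpos.ne' hrhs0).ne']
    -- main estimate
    have hmain := maux_upper hp hp1 hq1 hwmeas hhmeas hηmeas hWqpos (B := rhs) hBub hBt hGt
    have h9 := ENNReal.rpow_le_rpow hmain (by positivity : (0:ℝ) ≤ 1/q)
    rw [← ENNReal.rpow_mul, mul_one_div_cancel hq0.ne', ENNReal.rpow_one] at h9
    exact h9.trans (le_of_eq (by ring))
end
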